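/- arXiv:1310.8646 — 6 statements merged into one kernel-verified Lean document; each statement's English description precedes it below -/
import Mathlib

section
/- A reduced word in the graph product G(Γ) represents the identity element if and only if it is the empty word. -/
open Pointwise

/-- Relations of the graph product of cyclic groups: `s ^ n = 1` whenever the label of
`s` is the finite value `n`, and commutators of generators joined by an edge. -/
def graphProductRels {V : Type*} (Γ : SimpleGraph V) (c : V → ℕ∞) : Set (FreeGroup V) :=
  {r | (∃ (s : V) (n : ℕ), c s = (n : ℕ∞) ∧ r = FreeGroup.of s ^ n) ∨
       (∃ s t : V, Γ.Adj s t ∧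
         r = FreeGroup.of s * FreeGroup.of t * (FreeGroup.of s)⁻¹ * (FreeGroup.of t)⁻¹)}

/-- The graph product of cyclic groups associated to a graph `Γ` with labeling `c`. -/
abbrev GraphProduct {V : Type*} (Γ : SimpleGraph V) (c : V → ℕ∞) : Type _ :=
  PresentedGroup (graphProductRels Γ c)

/-- The generator of `GraphProduct Γ c` corresponding to a vertex `s`. -/
def gpGen {V : Type*} (Γ : SimpleGraph V) (c : V → ℕ∞) (s : V) : GraphProduct Γ c :=
  PresentedGroup.of s

/-- The element of the graph product represented by a word `(s₁^{e₁}, …, s_k^{e_k})`. -/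
def wordProd {V : Type*} (Γ : SimpleGraph V) (c : V → ℕ∞) (w : List (V × ℤ)) :
    GraphProduct Γ c :=
  (w.map (fun p => gpGen Γ c p.1 ^ p.2)).prod

/-- The elementary moves on words: deleting a letter that is trivial in the vertex group,
merging consecutive powers of the same generator, and swapping consecutive letters whose
generators are joined by an edge. -/
inductive GPMove {V : Type*} (Γ : SimpleGraph V) (c : V → ℕ∞) :
    List (V × ℤ) → List (V × ℤ) → Prop
  | del (w₁ w₂ : List (V × ℤ)) (s : V) (e : ℤ) (h : gpGen Γ c s ^ e = 1) :
      GPMove Γ c (w₁ ++ (s, e) :: w₂) (w₁ ++ w₂)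
  | merge (w₁ w₂ : List (V × ℤ)) (s : V) (a b : ℤ) :
      GPMove Γ c (w₁ ++ (s, a) :: (s, b) :: w₂) (w₁ ++ (s, a + b) :: w₂)
  | swap (w₁ w₂ : List (V × ℤ)) (s t : V) (a b : ℤ) (h : Γ.Adj s t) :
      GPMove Γ c (w₁ ++ (s, a) :: (t, b) :: w₂) (w₁ ++ (t, b) :: (s, a) :: w₂)

/-- A word is reduced if it cannot be shortened by any sequence of elementary moves. -/
def GPReduced {V : Type*} (Γ : SimpleGraph V) (c : V → ℕ∞) (w : List (V × ℤ)) : Prop :=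
  ∀ w', Relation.ReflTransGen (GPMove Γ c) w w' → w.length ≤ w'.length

/-- The length of a word: infinite-order letters count with the absolute value of their
exponent, finite-order letters count once. -/
def wordLen {V : Type*} (c : V → ℕ∞) (w : List (V × ℤ)) : ℕ :=
  (w.map (fun p => if c p.1 = ⊤ then p.2.natAbs else 1)).sum

/-- The length of a group element: the minimum of the lengths of words representing it. -/
noncomputable def elLen {V : Type*} (Γ : SimpleGraph V) (c : V → ℕ∞)
    (g : GraphProduct Γ c) : ℕ :=
  sInf {n | ∃ w, wordProd Γ c w = g ∧ wordLen c w = n}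

/-- `g` ends with the generator `s`. -/
def EndsWith {V : Type*} (Γ : SimpleGraph V) (c : V → ℕ∞) (g : GraphProduct Γ c)
    (s : V) : Prop :=
  ∃ (w : List (V × ℤ)) (e : ℤ), GPReduced Γ c (w ++ [(s, e)]) ∧
    wordProd Γ c (w ++ [(s, e)]) = g

namespace GPNF

open scoped Classical

variable {V : Type*} (Γ : SimpleGraph V) (c : V → ℕ∞)

/-- order parameter: `0` means infinite. -/
def mo (c : V → ℕ∞) (s : V) : ℕ := (c s).toNat

/-- `e` is trivial as an exponent of `s`. -/
def ZE (c : V → ℕ∞) (s : V) (e : ℤ) : Prop := ((mo c s : ℤ)) ∣ e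

lemma ZE_zero (s : V) : ZE c s 0 := dvd_zero _

lemma gpGen_pow_mo (s : V) : gpGen Γ c s ^ (mo c s) = 1 := by
  rcases h : c s with _ | n
  · simp [mo, h]
    rfl
  · have hr : (FreeGroup.of s ^ n : FreeGroup V) ∈ graphProductRels Γ c :=
      Or.inl ⟨s, n, h, rfl⟩
    have : (PresentedGroup.mk (graphProductRels Γ c)) (FreeGroup.of s ^ n) = 1 := by
      have := Subgroup.subset_normalClosure (s := graphProductRels Γ c) hr
      exact (QuotientGroup.eq_one_iff _).mpr this
    have hmo : mo c s = n := by simp [mo, h]; rfl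
    rw [hmo]
    simpa [gpGen, PresentedGroup.of, map_pow] using this

lemma gpGen_zpow_eq_one_of_ZE {s : V} {e : ℤ} (h : ZE c s e) : gpGen Γ c s ^ e = 1 := by
  obtain ⟨k, rfl⟩ := h
  rw [zpow_mul, zpow_natCast, gpGen_pow_mo, one_zpow]

lemma gpGen_comm {s t : V} (h : Γ.Adj s t) :
    gpGen Γ c s * gpGen Γ c t = gpGen Γ c t * gpGen Γ c s := by
  have hr : (FreeGroup.of s * FreeGroup.of t * (FreeGroup.of s)⁻¹ * (FreeGroup.of t)⁻¹ :
      FreeGroup V) ∈ graphProductRels Γ c := Or.inr ⟨s, t, h, rfl⟩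
  have h1 : (PresentedGroup.mk (graphProductRels Γ c))
      (FreeGroup.of s * FreeGroup.of t * (FreeGroup.of s)⁻¹ * (FreeGroup.of t)⁻¹) = 1 :=
    (QuotientGroup.eq_one_iff _).mpr (Subgroup.subset_normalClosure hr)
  have h2 : gpGen Γ c s * gpGen Γ c t * (gpGen Γ c s)⁻¹ * (gpGen Γ c t)⁻¹ = 1 := by
    simpa [gpGen, PresentedGroup.of, map_mul, map_inv] using h1
  exact mul_inv_eq_iff_eq_mul.mp (mul_inv_eq_one.mp h2)

lemma gpGen_commute {s t : V} (h : Γ.Adj s t) :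
    Commute (gpGen Γ c s) (gpGen Γ c t) := gpGen_comm Γ c h

/-- `s` is blocked in `u`: walking along letters adjacent to `s`, we never meet `s`. -/
def Blocked (Γ : SimpleGraph V) (s : V) : List (V × ℤ) → Prop
  | [] => True
  | (t, _) :: u => t ≠ s ∧ (Γ.Adj s t → Blocked Γ s u)

/-- normal form predicate. -/
def NF (Γ : SimpleGraph V) (c : V → ℕ∞) : List (V × ℤ) → Prop
  | [] => True
  | (s, e) :: u => ¬ ZE c s e ∧ Blocked Γ s u ∧ NF Γ c u

@[simp] lemma Blocked_nil (s : V) : Blocked Γ s [] := trivial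
@[simp] lemma Blocked_cons (s t : V) (f : ℤ) (u : List (V × ℤ)) :
    Blocked Γ s ((t, f) :: u) ↔ t ≠ s ∧ (Γ.Adj s t → Blocked Γ s u) := Iff.rfl
@[simp] lemma NF_nil : NF Γ c [] := trivial
@[simp] lemma NF_cons (s : V) (e : ℤ) (u : List (V × ℤ)) :
    NF Γ c ((s, e) :: u) ↔ ¬ ZE c s e ∧ Blocked Γ s u ∧ NF Γ c u := Iff.rfl

/-- One-step equivalence on words: change an exponent by a multiple of the order,
or swap adjacent commuting letters. -/
inductive Rel (Γ : SimpleGraph V) (c : V → ℕ∞) : List (V × ℤ) → List (V × ℤ) → Prop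
  | expo (a b : List (V × ℤ)) (s : V) (e e' : ℤ) (h : ZE c s (e - e')) :
      Rel Γ c (a ++ (s, e) :: b) (a ++ (s, e') :: b)
  | swap (a b : List (V × ℤ)) (s t : V) (p q : ℤ) (h : Γ.Adj s t) :
      Rel Γ c (a ++ (s, p) :: (t, q) :: b) (a ++ (t, q) :: (s, p) :: b)

def Eqv (Γ : SimpleGraph V) (c : V → ℕ∞) : List (V × ℤ) → List (V × ℤ) → Prop :=
  Relation.ReflTransGen (Rel Γ c)

variable {Γ c}

lemma Rel.symm {u v : List (V × ℤ)} (h : Rel Γ c u v) : Rel Γ c v u := by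
  cases h with
  | expo a b s e e' h =>
      exact Rel.expo a b s e' e (by simpa [ZE] using (dvd_neg.mpr h))
  | swap a b s t p q h => exact Rel.swap a b t s q p h.symm

namespace Eqv

@[refl] lemma refl (u : List (V × ℤ)) : Eqv Γ c u u := Relation.ReflTransGen.refl

lemma single {u v : List (V × ℤ)} (h : Rel Γ c u v) : Eqv Γ c u v :=
  Relation.ReflTransGen.single h

@[trans] lemma trans {u v w : List (V × ℤ)} (h : Eqv Γ c u v) (h' : Eqv Γ c v w) :
    Eqv Γ c u w := Relation.ReflTransGen.trans h h'

lemma symm {u v : List (V × ℤ)} (h : Eqv Γ c u v) : Eqv Γ c v u := by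
  induction h with
  | refl => rfl
  | tail _ h ih => exact trans (single h.symm) ih

end Eqv

lemma Rel.cons {u v : List (V × ℤ)} (x : V × ℤ) (h : Rel Γ c u v) :
    Rel Γ c (x :: u) (x :: v) := by
  cases h with
  | expo a b s e e' h => exact Rel.expo (x :: a) b s e e' h
  | swap a b s t p q h => exact Rel.swap (x :: a) b s t p q h

lemma Eqv.cons {u v : List (V × ℤ)} (x : V × ℤ) (h : Eqv Γ c u v) :
    Eqv Γ c (x :: u) (x :: v) := by
  induction h with
  | refl => rfl
  | tail _ h ih => exact Eqv.trans ih (Eqv.single (h.cons x))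

lemma Eqv.expo_head {b : List (V × ℤ)} {s : V} {e e' : ℤ} (h : ZE c s (e - e')) :
    Eqv Γ c ((s, e) :: b) ((s, e') :: b) := Eqv.single (Rel.expo [] b s e e' h)

lemma Eqv.swap_head {b : List (V × ℤ)} {s t : V} {p q : ℤ} (h : Γ.Adj s t) :
    Eqv Γ c ((s, p) :: (t, q) :: b) ((t, q) :: (s, p) :: b) :=
  Eqv.single (Rel.swap [] b s t p q h)

lemma Rel.length {u v : List (V × ℤ)} (h : Rel Γ c u v) : u.length = v.length := by
  cases h <;> simp

lemma Eqv.length {u v : List (V × ℤ)} (h : Eqv Γ c u v) : u.length = v.length := by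
  induction h with
  | refl => rfl
  | tail _ h ih => exact ih.trans h.length

lemma Eqv.eq_nil {v : List (V × ℤ)} (h : Eqv Γ c [] v) : v = [] := by
  have := h.length; simpa using (List.length_eq_zero_iff.mp this.symm)

variable (Γ c) in
/-- auxiliary left multiplication by `s^e` (with `e` nontrivial) on words. -/
noncomputable def mulA (s : V) (e : ℤ) : List (V × ℤ) → List (V × ℤ)
  | [] => [(s, e)]
  | (t, f) :: u =>
    if t = s then (if ZE c s (e + f) then u else (s, e + f) :: u)
    else if Γ.Adj s t then (t, f) :: mulA s e u
    else (s, e) :: (t, f) :: u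

variable (Γ c) in
/-- left multiplication by `s^e` on words. -/
noncomputable def mulW (s : V) (e : ℤ) (u : List (V × ℤ)) : List (V × ℤ) :=
  if ZE c s e then u else mulA Γ c s e u

@[simp] lemma mulA_nil (s : V) (e : ℤ) : mulA Γ c s e [] = [(s, e)] := rfl

lemma mulA_same (s : V) (e f : ℤ) (u : List (V × ℤ)) :
    mulA Γ c s e ((s, f) :: u) = if ZE c s (e + f) then u else (s, e + f) :: u := by
  simp [mulA]

lemma mulA_adj {s t : V} (h : Γ.Adj s t) (e f : ℤ) (u : List (V × ℤ)) :
    mulA Γ c s e ((t, f) :: u) = (t, f) :: mulA Γ c s e u := by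
  have hne : t ≠ s := fun hh => by subst hh; exact Γ.irrefl h
  simp [mulA, hne, h]

lemma mulA_nadj {s t : V} (hne : t ≠ s) (h : ¬ Γ.Adj s t) (e f : ℤ) (u : List (V × ℤ)) :
    mulA Γ c s e ((t, f) :: u) = (s, e) :: (t, f) :: u := by
  simp [mulA, hne, h]

lemma mulW_of_ZE {s : V} {e : ℤ} (h : ZE c s e) (u : List (V × ℤ)) :
    mulW Γ c s e u = u := by simp [mulW, h]

lemma mulW_of_not_ZE {s : V} {e : ℤ} (h : ¬ ZE c s e) (u : List (V × ℤ)) :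
    mulW Γ c s e u = mulA Γ c s e u := by simp [mulW, h]

/-- Lemma G: if `s` is blocked in `u`, multiplication just prepends, up to `Eqv`. -/
lemma mulA_of_blocked {s : V} (e : ℤ) {u : List (V × ℤ)} (hb : Blocked Γ s u) :
    Eqv Γ c (mulA Γ c s e u) ((s, e) :: u) := by
  induction u with
  | nil => rw [mulA_nil]
  | cons x u ih =>
      obtain ⟨t, f⟩ := x
      obtain ⟨hne, hadj⟩ := hb
      by_cases h : Γ.Adj s t
      · rw [mulA_adj h]
        exact Eqv.trans (Eqv.cons _ (ih (hadj h))) (Eqv.swap_head h.symm)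
      · rw [mulA_nadj hne h]

/-- `mulA` by an adjacent generator preserves blockedness. -/
lemma Blocked_mulA {s t : V} (hadj : Γ.Adj s t) (e : ℤ) {u : List (V × ℤ)}
    (hb : Blocked Γ t u) : Blocked Γ t (mulA Γ c s e u) := by
  induction u with
  | nil => exact ⟨hadj.ne, fun _ => trivial⟩
  | cons y u ih =>
      obtain ⟨r, g⟩ := y
      obtain ⟨hrt, hb'⟩ := hb
      by_cases hrs : r = s
      · subst hrs
        rw [mulA_same]
        split
        · exact hb' hadj.symm
        · exact ⟨hrt, hb'⟩
      · by_cases h2 : Γ.Adj s r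
        · rw [mulA_adj h2]
          exact ⟨hrt, fun htr => ih (hb' htr)⟩
        · rw [mulA_nadj hrs h2]
          exact ⟨hadj.ne, fun _ => ⟨hrt, hb'⟩⟩

/-- Lemma A: `mulA` preserves normal forms. -/
lemma NF_mulA {s : V} {e : ℤ} (he : ¬ ZE c s e) {u : List (V × ℤ)} (hu : NF Γ c u) :
    NF Γ c (mulA Γ c s e u) := by
  induction u with
  | nil => simpa using he
  | cons x u ih =>
      obtain ⟨t, f⟩ := x
      obtain ⟨hf, hb, hu⟩ := hu
      by_cases hts : t = s
      · subst hts
        rw [mulA_same]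
        split
        · exact hu
        · exact ⟨by assumption, hb, hu⟩
      · by_cases h : Γ.Adj s t
        · rw [mulA_adj h]
          exact ⟨hf, Blocked_mulA h e hb, ih hu⟩
        · rw [mulA_nadj hts h]
          exact ⟨he, ⟨hts, fun hh => absurd hh h⟩, hf, hb, hu⟩

lemma NF_mulW (s : V) (e : ℤ) {u : List (V × ℤ)} (hu : NF Γ c u) :
    NF Γ c (mulW Γ c s e u) := by
  by_cases h : ZE c s e
  · rwa [mulW_of_ZE h]
  · rw [mulW_of_not_ZE h]; exact NF_mulA h hu

lemma ZE.add {s : V} {e f : ℤ} (he : ZE c s e) (hf : ZE c s f) : ZE c s (e + f) :=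
  dvd_add he hf

lemma ZE_iff_of_ZE_sub {s : V} {e e' : ℤ} (h : ZE c s (e - e')) :
    (ZE c s e ↔ ZE c s e') := by
  constructor
  · intro he; simpa [ZE] using dvd_sub he h
  · intro he; simpa [ZE] using dvd_add h he

/-- shifting the exponent by a trivial amount, up to `Eqv`. -/
lemma mulA_expo {s : V} {e e' : ℤ} (h : ZE c s (e - e')) (u : List (V × ℤ)) :
    Eqv Γ c (mulA Γ c s e u) (mulA Γ c s e' u) := by
  induction u with
  | nil => exact Eqv.expo_head h
  | cons x u ih =>
      obtain ⟨t, f⟩ := x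
      by_cases hts : s = t
      · obtain rfl := hts
        rw [mulA_same, mulA_same]
        have hz : ZE c s (e + f) ↔ ZE c s (e' + f) :=
          ZE_iff_of_ZE_sub (by simpa using h)
        by_cases h1 : ZE c s (e + f)
        · rw [if_pos h1, if_pos (hz.mp h1)]
        · rw [if_neg h1, if_neg (fun hh => h1 (hz.mpr hh))]
          exact Eqv.expo_head (by simpa using h)
      · by_cases hadj : Γ.Adj s t
        · rw [mulA_adj hadj, mulA_adj hadj]
          exact Eqv.cons _ ih
        · rw [mulA_nadj (fun hh => hts hh.symm) hadj, mulA_nadj (fun hh => hts hh.symm) hadj]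
          exact Eqv.expo_head h

lemma mulW_expo {s : V} {e e' : ℤ} (h : ZE c s (e - e')) (u : List (V × ℤ)) :
    Eqv Γ c (mulW Γ c s e u) (mulW Γ c s e' u) := by
  by_cases h1 : ZE c s e
  · rw [mulW_of_ZE h1, mulW_of_ZE ((ZE_iff_of_ZE_sub h).mp h1)]
  · rw [mulW_of_not_ZE h1, mulW_of_not_ZE (fun hh => h1 ((ZE_iff_of_ZE_sub h).mpr hh))]
    exact mulA_expo h u

/-- Lemma B: additivity of `mulW` on normal forms, up to `Eqv`. -/
lemma mulW_add {s : V} (e f : ℤ) {u : List (V × ℤ)} (hu : NF Γ c u) :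
    Eqv Γ c (mulW Γ c s e (mulW Γ c s f u)) (mulW Γ c s (e + f) u) := by
  by_cases hf : ZE c s f
  · rw [mulW_of_ZE hf]
    refine mulW_expo ?_ u
    have h3 : e - (e + f) = -f := by ring
    rw [h3]; exact dvd_neg.mpr hf
  by_cases he : ZE c s e
  · rw [mulW_of_ZE he]
    refine (mulW_expo ?_ u).symm
    have h3 : e + f - f = e := by ring
    rw [h3]; exact he
  rw [mulW_of_not_ZE hf, mulW_of_not_ZE he]
  induction u with
  | nil =>
      rw [mulA_nil, mulA_same]
      by_cases h1 : ZE c s (e + f)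
      · rw [if_pos (by simpa using h1), mulW_of_ZE h1]
      · rw [if_neg (by simpa using h1), mulW_of_not_ZE h1, mulA_nil]
  | cons x u ih =>
      obtain ⟨t, g⟩ := x
      obtain ⟨hg, hb, hu⟩ := hu
      by_cases hts : s = t
      · obtain rfl := hts
        rw [mulA_same]
        by_cases h1 : ZE c s (f + g)
        · rw [if_pos h1]
          have hL : Eqv Γ c (mulA Γ c s e u) ((s, e) :: u) := mulA_of_blocked e hb
          by_cases h2 : ZE c s (e + f)
          · rw [mulW_of_ZE h2]
            refine hL.trans (Eqv.expo_head ?_)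
            have h3 : e - g = (e + f) - (f + g) := by ring
            rw [h3]; exact dvd_sub h2 h1
          · rw [mulW_of_not_ZE h2, mulA_same, if_neg (by
              intro hh
              apply he
              have h3 : e = (e + f + g) - (f + g) := by ring
              rw [h3]; exact dvd_sub hh h1)]
            refine hL.trans (Eqv.expo_head ?_)
            have h3 : e - (e + f + g) = -(f + g) := by ring
            rw [h3]; exact dvd_neg.mpr h1
        · rw [if_neg h1]
          rw [mulA_same]
          by_cases h2 : ZE c s (e + f)
          · rw [mulW_of_ZE h2]
            have hng : ¬ ZE c s (e + (f + g)) := by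
              intro hh
              apply hg
              have h3 : g = (e + (f + g)) - (e + f) := by ring
              rw [h3]; exact dvd_sub hh h2
            rw [if_neg hng]
            refine Eqv.expo_head ?_
            have h3 : e + (f + g) - g = e + f := by ring
            rw [h3]; exact h2
          · rw [mulW_of_not_ZE h2, mulA_same, add_assoc]
      · by_cases hadj : Γ.Adj s t
        · rw [mulA_adj hadj, mulA_adj hadj]
          have ihu := ih hu
          by_cases h2 : ZE c s (e + f)
          · rw [mulW_of_ZE h2] at ihu ⊢
            exact Eqv.cons _ ihu
          · rw [mulW_of_not_ZE h2] at ihu ⊢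
            rw [mulA_adj hadj]
            exact Eqv.cons _ ihu
        · rw [mulA_nadj (fun hh => hts hh.symm) hadj, mulA_same]
          by_cases h2 : ZE c s (e + f)
          · rw [if_pos h2, mulW_of_ZE h2]
          · rw [if_neg h2, mulW_of_not_ZE h2, mulA_nadj (fun hh => hts hh.symm) hadj]

/-- Lemma C: multiplications by adjacent generators commute, up to `Eqv`. -/
lemma mulA_comm_adj {s t : V} (h : Γ.Adj s t) (e f : ℤ)
    (he : ¬ ZE c s e) (hf : ¬ ZE c t f) (u : List (V × ℤ)) :
    Eqv Γ c (mulA Γ c s e (mulA Γ c t f u)) (mulA Γ c t f (mulA Γ c s e u)) := by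
  induction u with
  | nil =>
      rw [mulA_nil, mulA_nil, mulA_adj h, mulA_adj h.symm, mulA_nil, mulA_nil]
      exact Eqv.swap_head h.symm
  | cons x u ih =>
      obtain ⟨r, g⟩ := x
      by_cases hrs : s = r
      · obtain rfl := hrs
        rw [mulA_adj h.symm, mulA_same, mulA_same]
        by_cases h1 : ZE c s (e + g)
        · rw [if_pos h1, if_pos h1]
        · rw [if_neg h1, if_neg h1, mulA_adj h.symm]
      · by_cases hrt : t = r
        · obtain rfl := hrt
          rw [mulA_same, mulA_adj h, mulA_same]
          by_cases h1 : ZE c t (f + g)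
          · rw [if_pos h1, if_pos h1]
          · rw [if_neg h1, if_neg h1, mulA_adj h]
        · have hrs' : r ≠ s := fun hh => hrs hh.symm
          have hrt' : r ≠ t := fun hh => hrt hh.symm
          by_cases has : Γ.Adj s r
          · by_cases hat : Γ.Adj t r
            · rw [mulA_adj hat, mulA_adj has, mulA_adj has, mulA_adj hat]
              exact Eqv.cons _ ih
            · rw [mulA_nadj hrt' hat, mulA_adj h, mulA_adj has, mulA_nadj hrt' hat]
          · by_cases hat : Γ.Adj t r
            · rw [mulA_adj hat, mulA_nadj hrs' has, mulA_nadj hrs' has,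
                mulA_adj h.symm, mulA_adj hat]
            · rw [mulA_nadj hrt' hat, mulA_adj h, mulA_nadj hrs' has,
                mulA_adj h.symm, mulA_nadj hrt' hat]
              exact Eqv.swap_head h.symm

lemma mulW_comm_adj {s t : V} (h : Γ.Adj s t) (e f : ℤ) (u : List (V × ℤ)) :
    Eqv Γ c (mulW Γ c s e (mulW Γ c t f u)) (mulW Γ c t f (mulW Γ c s e u)) := by
  by_cases he : ZE c s e
  · rw [mulW_of_ZE he, mulW_of_ZE he]
  by_cases hf : ZE c t f
  · rw [mulW_of_ZE hf, mulW_of_ZE hf]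
  rw [mulW_of_not_ZE he, mulW_of_not_ZE hf, mulW_of_not_ZE he, mulW_of_not_ZE hf]
  exact mulA_comm_adj h e f he hf u

/-- Lemma D: `mulA` respects one-step equivalence. -/
lemma mulA_rel {u v : List (V × ℤ)} (s : V) (e : ℤ) (h : Rel Γ c u v) :
    Eqv Γ c (mulA Γ c s e u) (mulA Γ c s e v) := by
  induction h with
  | expo a b r g g' hz =>
      induction a with
      | nil =>
          simp only [List.nil_append]
          by_cases hsr : s = r
          · obtain rfl := hsr
            rw [mulA_same, mulA_same]
            have hiff : ZE c s (e + g) ↔ ZE c s (e + g') :=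
              ZE_iff_of_ZE_sub (by simpa using hz)
            by_cases h1 : ZE c s (e + g)
            · rw [if_pos h1, if_pos (hiff.mp h1)]
            · rw [if_neg h1, if_neg (fun hh => h1 (hiff.mpr hh))]
              exact Eqv.expo_head (by simpa using hz)
          · by_cases hadj : Γ.Adj s r
            · rw [mulA_adj hadj, mulA_adj hadj]
              exact Eqv.expo_head hz
            · rw [mulA_nadj (fun hh => hsr hh.symm) hadj,
                mulA_nadj (fun hh => hsr hh.symm) hadj]
              exact Eqv.cons _ (Eqv.expo_head hz)
      | cons x a iha =>
          obtain ⟨r2, g2⟩ := x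
          simp only [List.cons_append]
          by_cases hsr : s = r2
          · obtain rfl := hsr
            rw [mulA_same, mulA_same]
            by_cases h1 : ZE c s (e + g2)
            · rw [if_pos h1, if_pos h1]
              exact Eqv.single (Rel.expo a b r g g' hz)
            · rw [if_neg h1, if_neg h1]
              exact Eqv.cons _ (Eqv.single (Rel.expo a b r g g' hz))
          · by_cases hadj : Γ.Adj s r2
            · rw [mulA_adj hadj, mulA_adj hadj]
              exact Eqv.cons _ iha
            · rw [mulA_nadj (fun hh => hsr hh.symm) hadj,
                mulA_nadj (fun hh => hsr hh.symm) hadj]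
              exact Eqv.cons _ (Eqv.cons _ (Eqv.single (Rel.expo a b r g g' hz)))
  | swap a b x y p q hxy =>
      induction a with
      | nil =>
          simp only [List.nil_append]
          by_cases hsx : s = x
          · obtain rfl := hsx
            rw [mulA_adj hxy, mulA_same, mulA_same]
            by_cases h1 : ZE c s (e + p)
            · rw [if_pos h1, if_pos h1]
            · rw [if_neg h1, if_neg h1]
              exact Eqv.swap_head hxy
          · by_cases hsy : s = y
            · obtain rfl := hsy
              rw [mulA_adj hxy.symm, mulA_same, mulA_same]
              by_cases h1 : ZE c s (e + q)
              · rw [if_pos h1, if_pos h1]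
              · rw [if_neg h1, if_neg h1]
                exact Eqv.swap_head hxy
            · by_cases hax : Γ.Adj s x
              · by_cases hay : Γ.Adj s y
                · rw [mulA_adj hax, mulA_adj hay, mulA_adj hay, mulA_adj hax]
                  exact Eqv.single (Rel.swap [] _ x y p q hxy)
                · rw [mulA_adj hax, mulA_nadj (fun hh => hsy hh.symm) hay,
                    mulA_nadj (fun hh => hsy hh.symm) hay]
                  exact Eqv.trans (Eqv.swap_head hax.symm)
                    (Eqv.cons _ (Eqv.swap_head hxy))
              · by_cases hay : Γ.Adj s y
                · rw [mulA_nadj (fun hh => hsx hh.symm) hax, mulA_adj hay,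
                    mulA_nadj (fun hh => hsx hh.symm) hax]
                  exact Eqv.trans (Eqv.cons _ (Eqv.swap_head hxy))
                    (Eqv.swap_head hay)
                · rw [mulA_nadj (fun hh => hsx hh.symm) hax,
                    mulA_nadj (fun hh => hsy hh.symm) hay]
                  exact Eqv.cons _ (Eqv.swap_head hxy)
      | cons z a iha =>
          obtain ⟨r2, g2⟩ := z
          simp only [List.cons_append]
          by_cases hsr : s = r2
          · obtain rfl := hsr
            rw [mulA_same, mulA_same]
            by_cases h1 : ZE c s (e + g2)
            · rw [if_pos h1, if_pos h1]
              exact Eqv.single (Rel.swap a b x y p q hxy)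
            · rw [if_neg h1, if_neg h1]
              exact Eqv.cons _ (Eqv.single (Rel.swap a b x y p q hxy))
          · by_cases hadj : Γ.Adj s r2
            · rw [mulA_adj hadj, mulA_adj hadj]
              exact Eqv.cons _ iha
            · rw [mulA_nadj (fun hh => hsr hh.symm) hadj,
                mulA_nadj (fun hh => hsr hh.symm) hadj]
              exact Eqv.cons _ (Eqv.cons _ (Eqv.single (Rel.swap a b x y p q hxy)))

lemma mulW_eqv {u v : List (V × ℤ)} (s : V) (e : ℤ) (h : Eqv Γ c u v) :
    Eqv Γ c (mulW Γ c s e u) (mulW Γ c s e v) := by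
  by_cases hz : ZE c s e
  · rwa [mulW_of_ZE hz, mulW_of_ZE hz]
  · rw [mulW_of_not_ZE hz, mulW_of_not_ZE hz]
    induction h with
    | refl => rfl
    | tail _ hr ih => exact Eqv.trans ih (mulA_rel s e hr)

section Moves

lemma not_ZE_of_reduced {a b : List (V × ℤ)} {s : V} {e : ℤ}
    (hr : GPReduced Γ c (a ++ (s, e) :: b)) : ¬ ZE c s e := by
  intro hz
  have hmv : GPMove Γ c (a ++ (s, e) :: b) (a ++ b) :=
    GPMove.del a b s e (gpGen_zpow_eq_one_of_ZE Γ c hz)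
  have := hr (a ++ b) (Relation.ReflTransGen.single hmv)
  simp at this

lemma blocked_of_reduced :
    ∀ (b a : List (V × ℤ)) (s : V) (e : ℤ), GPReduced Γ c (a ++ (s, e) :: b) →
      Blocked Γ s b := by
  intro b
  induction b with
  | nil => intro _ _ _ _; trivial
  | cons x b ih =>
      obtain ⟨t, g⟩ := x
      intro a s e hr
      constructor
      · intro hts
        obtain rfl := hts.symm
        have hmv : GPMove Γ c (a ++ (s, e) :: (s, g) :: b) (a ++ (s, e + g) :: b) :=
          GPMove.merge a b s e g
        have := hr _ (Relation.ReflTransGen.single hmv)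
        simp at this
      · intro hadj
        have hmv : GPMove Γ c (a ++ (s, e) :: (t, g) :: b) (a ++ (t, g) :: (s, e) :: b) :=
          GPMove.swap a b s t e g hadj
        have hr2 : GPReduced Γ c (a ++ (t, g) :: (s, e) :: b) := by
          intro w' hw'
          have := hr w' (Relation.ReflTransGen.trans (Relation.ReflTransGen.single hmv) hw')
          simpa using this
        have := ih (a ++ [(t, g)]) s e (by simpa using hr2)
        exact this

lemma NF_of_reduced' : ∀ (w a : List (V × ℤ)), GPReduced Γ c (a ++ w) → NF Γ c w := by
  intro w
  induction w with
  | nil => intro _ _; trivial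
  | cons x w ih =>
      obtain ⟨s, e⟩ := x
      intro a hr
      refine ⟨not_ZE_of_reduced hr, blocked_of_reduced w a s e hr, ?_⟩
      exact ih (a ++ [(s, e)]) (by simpa using hr)

lemma NF_of_reduced {w : List (V × ℤ)} (hr : GPReduced Γ c w) : NF Γ c w :=
  NF_of_reduced' w [] hr

end Moves

section Action

variable (Γ c) in
/-- The type of normal-form words. -/
abbrev NW := {u : List (V × ℤ) // NF Γ c u}

variable (Γ c) in
noncomputable instance NWSetoid : Setoid (NW Γ c) where
  r u v := Eqv Γ c u.1 v.1
  iseqv := ⟨fun _ => Eqv.refl _, Eqv.symm, Eqv.trans⟩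

variable (Γ c) in
/-- Equivalence classes of normal-form words. -/
abbrev Q := Quotient (NWSetoid Γ c)

variable (Γ c) in
noncomputable def mulQ (s : V) (e : ℤ) : Q Γ c → Q Γ c :=
  Quotient.map (fun u => ⟨mulW Γ c s e u.1, NF_mulW s e u.2⟩)
    (fun _ _ h => mulW_eqv s e h)

lemma mulQ_mk (s : V) (e : ℤ) (u : NW Γ c) :
    mulQ Γ c s e ⟦u⟧ = ⟦⟨mulW Γ c s e u.1, NF_mulW s e u.2⟩⟧ := rfl

lemma mulQ_mulQ (s : V) (e f : ℤ) (q : Q Γ c) :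
    mulQ Γ c s e (mulQ Γ c s f q) = mulQ Γ c s (e + f) q := by
  induction q using Quotient.inductionOn with
  | h u => exact Quotient.sound (mulW_add e f u.2)

lemma mulQ_of_ZE {s : V} {e : ℤ} (h : ZE c s e) (q : Q Γ c) : mulQ Γ c s e q = q := by
  induction q using Quotient.inductionOn with
  | h u =>
      refine Quotient.sound ?_
      show Eqv Γ c (mulW Γ c s e u.1) u.1
      rw [mulW_of_ZE h]

lemma mulQ_comm {s t : V} (h : Γ.Adj s t) (e f : ℤ) (q : Q Γ c) :
    mulQ Γ c s e (mulQ Γ c t f q) = mulQ Γ c t f (mulQ Γ c s e q) := by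
  induction q using Quotient.inductionOn with
  | h u => exact Quotient.sound (mulW_comm_adj h e f u.1)

variable (Γ c) in
/-- The permutation of `Q` given by multiplication by `s ^ e`. -/
noncomputable def permZ (s : V) (e : ℤ) : Equiv.Perm (Q Γ c) where
  toFun := mulQ Γ c s e
  invFun := mulQ Γ c s (-e)
  left_inv q := by rw [mulQ_mulQ]; exact mulQ_of_ZE (by simpa using ZE_zero c s) q
  right_inv q := by rw [mulQ_mulQ]; exact mulQ_of_ZE (by simpa using ZE_zero c s) q

@[simp] lemma permZ_apply (s : V) (e : ℤ) (q : Q Γ c) :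
    permZ Γ c s e q = mulQ Γ c s e q := rfl

lemma permZ_add (s : V) (e f : ℤ) :
    permZ Γ c s (e + f) = permZ Γ c s e * permZ Γ c s f := by
  ext q
  simp [Equiv.Perm.mul_apply, mulQ_mulQ]

lemma permZ_zpow (s : V) (e : ℤ) : permZ Γ c s 1 ^ e = permZ Γ c s e := by
  have h1 : (zpowersHom (Equiv.Perm (Q Γ c)) (permZ Γ c s 1) : Multiplicative ℤ →* _) =
      { toFun := fun e => permZ Γ c s e.toAdd,
        map_one' := by
          ext q
          exact mulQ_of_ZE (ZE_zero c s) q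
        map_mul' := fun a b => permZ_add s a.toAdd b.toAdd } := by
    apply MonoidHom.ext_mint
    simp [zpowersHom_apply]
  have := DFunLike.congr_fun h1 (Multiplicative.ofAdd e)
  simpa [zpowersHom_apply] using this

variable (Γ c) in
noncomputable def toPerm : GraphProduct Γ c →* Equiv.Perm (Q Γ c) := by
  refine PresentedGroup.toGroup (f := fun s => permZ Γ c s 1) ?_
  rintro r (⟨s, n, hcs, rfl⟩ | ⟨s, t, hadj, rfl⟩)
  · rw [map_pow, FreeGroup.lift_apply_of]
    have : permZ Γ c s 1 ^ (n : ℤ) = permZ Γ c s n := permZ_zpow s n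
    rw [← zpow_natCast, this]
    ext q
    refine mulQ_of_ZE ?_ q
    have : mo c s = n := by simp [mo, hcs]
    exact ⟨1, by simp [this]⟩
  · simp only [map_mul, map_inv, FreeGroup.lift_apply_of]
    have hinv : ∀ (r : V), (permZ Γ c r 1)⁻¹ = permZ Γ c r (-1) := fun r => rfl
    rw [hinv, hinv]
    ext q
    simp only [Equiv.Perm.mul_apply, Equiv.Perm.one_apply, permZ_apply]
    rw [mulQ_comm hadj, mulQ_mulQ]
    have h0 : (1 : ℤ) + -1 = 0 := by norm_num
    rw [h0, mulQ_of_ZE (ZE_zero c s), mulQ_mulQ, h0, mulQ_of_ZE (ZE_zero c t)]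

lemma toPerm_gpGen (s : V) : toPerm Γ c (gpGen Γ c s) = permZ Γ c s 1 :=
  PresentedGroup.toGroup.of _

lemma wordProd_nil : wordProd Γ c [] = 1 := rfl

lemma wordProd_cons (s : V) (e : ℤ) (w : List (V × ℤ)) :
    wordProd Γ c ((s, e) :: w) = gpGen Γ c s ^ e * wordProd Γ c w := by
  simp [wordProd]

/-- The key computation: a normal-form word acts on the empty word by producing itself. -/
lemma toPerm_wordProd (w : List (V × ℤ)) (hw : NF Γ c w) :
    toPerm Γ c (wordProd Γ c w) ⟦(⟨[], NF_nil Γ c⟩ : NW Γ c)⟧ = ⟦(⟨w, hw⟩ : NW Γ c)⟧ := by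
  induction w with
  | nil => rw [wordProd_nil, map_one]; rfl
  | cons x w ih =>
      obtain ⟨s, e⟩ := x
      obtain ⟨hze, hb, hw'⟩ := hw
      rw [wordProd_cons, map_mul, map_zpow, toPerm_gpGen, permZ_zpow,
        Equiv.Perm.mul_apply, ih hw', permZ_apply, mulQ_mk]
      refine Quotient.sound ?_
      show Eqv Γ c (mulW Γ c s e w) ((s, e) :: w)
      rw [mulW_of_not_ZE hze]
      exact mulA_of_blocked e hb

end Action

lemma main {w : List (V × ℤ)} (hw : GPReduced Γ c w) :
    wordProd Γ c w = 1 ↔ w = [] := by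
  constructor
  · intro h1
    have hnf := NF_of_reduced hw
    have hkey := toPerm_wordProd w hnf
    rw [h1, map_one, Equiv.Perm.one_apply] at hkey
    have heqv : Eqv Γ c [] w := Quotient.exact hkey
    exact (heqv.eq_nil).symm ▸ rfl
  · rintro rfl
    rfl

end GPNF

/-- a reduced word represents the identity if and only if it is empty. -/
theorem reduced_word_eq_one_iff_nil {V : Type*} [Fintype V] [DecidableEq V]
    (Γ : SimpleGraph V) (c : V → ℕ∞) (w : List (V × ℤ)) (hw : GPReduced Γ c w) :
    wordProd Γ c w = 1 ↔ w = [] :=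
  GPNF.main hw
end

section
/- In the graph product G(Γ), if an element g ends with the generator s and also ends with the generator t, with s ≠ t, then s and t are joined by an edge of Γ (and hence commute). -/
open Pointwise

namespace GPProof

variable {V : Type*} (Γ : SimpleGraph V) (c : V → ℕ∞)

attribute [local instance] Classical.propDecidable

/-- element-level letters -/
abbrev Lett := V × GraphProduct Γ c

/-- element-level image of an exponent word -/
def iota (w : List (V × ℤ)) : List (Lett Γ c) :=
  w.map fun p => (p.1, gpGen Γ c p.1 ^ p.2)

@[simp] lemma iota_nil : iota Γ c [] = [] := rfl
@[simp] lemma iota_cons (p : V × ℤ) (w : List (V × ℤ)) :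
    iota Γ c (p :: w) = (p.1, gpGen Γ c p.1 ^ p.2) :: iota Γ c w := rfl
@[simp] lemma iota_append (u v : List (V × ℤ)) :
    iota Γ c (u ++ v) = iota Γ c u ++ iota Γ c v := List.map_append
@[simp] lemma iota_length (w : List (V × ℤ)) : (iota Γ c w).length = w.length :=
  List.length_map _

/-- the swap move on element-level words -/
inductive ESw : List (Lett Γ c) → List (Lett Γ c) → Prop
  | head (a b : Lett Γ c) (w : List (Lett Γ c)) (h : Γ.Adj a.1 b.1) :
      ESw (a :: b :: w) (b :: a :: w)
  | cons (a : Lett Γ c) {w w' : List (Lett Γ c)} : ESw w w' → ESw (a :: w) (a :: w')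

/-- the shrinking moves on element-level words -/
inductive ESh : List (Lett Γ c) → List (Lett Γ c) → Prop
  | del (s : V) (x : GraphProduct Γ c) (w : List (Lett Γ c)) (h : x = 1) :
      ESh ((s, x) :: w) w
  | merge (s : V) (x y : GraphProduct Γ c) (w : List (Lett Γ c)) :
      ESh ((s, x) :: (s, y) :: w) ((s, x * y) :: w)
  | cons (a : Lett Γ c) {w w' : List (Lett Γ c)} : ESh w w' → ESh (a :: w) (a :: w')

def EStep (w w' : List (Lett Γ c)) : Prop := ESw Γ c w w' ∨ ESh Γ c w w'

def SwEq : List (Lett Γ c) → List (Lett Γ c) → Prop := Relation.ReflTransGen (ESw Γ c)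

variable {Γ c}

lemma ESw.symm' {w w' : List (Lett Γ c)} (h : ESw Γ c w w') : ESw Γ c w' w := by
  induction h with
  | head a b w h => exact ESw.head b a w h.symm
  | cons a _ ih => exact ESw.cons a ih

lemma ESw.perm {w w' : List (Lett Γ c)} (h : ESw Γ c w w') : w.Perm w' := by
  induction h with
  | head a b w _ => exact List.Perm.swap b a w
  | cons a _ ih => exact List.Perm.cons a ih

lemma SwEq.perm {w w' : List (Lett Γ c)} (h : SwEq Γ c w w') : w.Perm w' := by
  induction h with
  | refl => exact List.Perm.refl _
  | tail _ h2 ih => exact ih.trans h2.perm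

lemma SwEq.rfl {w : List (Lett Γ c)} : SwEq Γ c w w := Relation.ReflTransGen.refl

lemma SwEq.symm {w w' : List (Lett Γ c)} (h : SwEq Γ c w w') : SwEq Γ c w' w :=
  haveI : Std.Symm (ESw Γ c) := ⟨fun _ _ hh => hh.symm'⟩; Relation.ReflTransGen.symmetric.symm _ _ h

lemma SwEq.trans {w₁ w₂ w₃ : List (Lett Γ c)} (h : SwEq Γ c w₁ w₂) (h' : SwEq Γ c w₂ w₃) :
    SwEq Γ c w₁ w₃ := Relation.ReflTransGen.trans h h'

lemma SwEq.single {w w' : List (Lett Γ c)} (h : ESw Γ c w w') : SwEq Γ c w w' :=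
  Relation.ReflTransGen.single h

lemma SwEq.cons (a : Lett Γ c) {w w' : List (Lett Γ c)} (h : SwEq Γ c w w') :
    SwEq Γ c (a :: w) (a :: w') := by
  induction h with
  | refl => exact SwEq.rfl
  | tail _ h2 ih => exact ih.trans (SwEq.single (ESw.cons a h2))

lemma SwEq.length {w w' : List (Lett Γ c)} (h : SwEq Γ c w w') : w.length = w'.length :=
  h.perm.length_eq

lemma gpmove_cons (a : V × ℤ) {w w' : List (V × ℤ)} (h : GPMove Γ c w w') :
    GPMove Γ c (a :: w) (a :: w') := by
  cases h with
  | del w₁ w₂ s e h => exact GPMove.del (a :: w₁) w₂ s e h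
  | merge w₁ w₂ s x y => exact GPMove.merge (a :: w₁) w₂ s x y
  | swap w₁ w₂ s t x y h => exact GPMove.swap (a :: w₁) w₂ s t x y h

lemma gpmoves_cons (a : V × ℤ) {w w' : List (V × ℤ)}
    (h : Relation.ReflTransGen (GPMove Γ c) w w') :
    Relation.ReflTransGen (GPMove Γ c) (a :: w) (a :: w') :=
  Relation.ReflTransGen.lift _ (fun _ _ hh => gpmove_cons a hh) _ _ h

lemma reduced_tail {a : V × ℤ} {w : List (V × ℤ)} (h : GPReduced Γ c (a :: w)) :
    GPReduced Γ c w := by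
  intro w' hw'
  have := h (a :: w') (gpmoves_cons a hw')
  simpa using this

/-- lift a single element-level step on `iota w` back to a `GPMove` on `w`. -/
lemma lift_estep {w : List (V × ℤ)} {u : List (Lett Γ c)} (h : EStep Γ c (iota Γ c w) u) :
    ∃ w', GPMove Γ c w w' ∧ iota Γ c w' = u := by
  cases h with
  | inl h =>
    induction w generalizing u with
    | nil => rw [iota_nil] at h; cases h
    | cons p w ih =>
      rw [iota_cons] at h
      generalize hiw : iota Γ c w = lw at h
      cases h with
      | head a b m hadj =>
        cases w with
        | nil => simp at hiw
        | cons q w₀ =>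
          rw [iota_cons] at hiw
          injection hiw with h1 h2
          refine ⟨q :: p :: w₀, ?_, ?_⟩
          · have := GPMove.swap (Γ := Γ) (c := c) [] w₀ p.1 q.1 p.2 q.2 (by
              rw [← h1] at hadj; exact hadj)
            simpa using this
          · simp [h1, h2]
      | cons a hst =>
        obtain ⟨w', hmv, hiw'⟩ := ih (hiw ▸ hst)
        exact ⟨p :: w', gpmove_cons p hmv, by simp [hiw']⟩
  | inr h =>
    induction w generalizing u with
    | nil => rw [iota_nil] at h; cases h
    | cons p w ih =>
      rw [iota_cons] at h
      generalize hiw : iota Γ c w = lw at h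
      cases h with
      | del s x m hx =>
        refine ⟨w, ?_, hiw⟩
        have := GPMove.del (Γ := Γ) (c := c) [] w p.1 p.2 hx
        simpa using this
      | merge s x y m =>
        cases w with
        | nil => simp at hiw
        | cons q w₀ =>
          rw [iota_cons] at hiw
          injection hiw with h1 h2
          have hq : q.1 = p.1 := by
            have := congrArg Prod.fst h1
            simpa using this
          have hy : gpGen Γ c p.1 ^ q.2 = y := by
            have := congrArg Prod.snd h1
            simpa [hq] using this
          refine ⟨(p.1, p.2 + q.2) :: w₀, ?_, ?_⟩
          · have := GPMove.merge (Γ := Γ) (c := c) [] w₀ p.1 p.2 q.2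
            have hpq : (q.1, q.2) = (p.1, q.2) := by rw [hq]
            have hq2 : q = (p.1, q.2) := by rw [← hq]
            rw [hq2]
            simpa using this
          · simp [zpow_add, h2, hy]
      | cons a hst =>
        obtain ⟨w', hmv, hiw'⟩ := ih (hiw ▸ hst)
        exact ⟨p :: w', gpmove_cons p hmv, by simp [hiw']⟩

lemma lift_echain' : ∀ {x u : List (Lett Γ c)}, Relation.ReflTransGen (EStep Γ c) x u →
    ∀ w : List (V × ℤ), iota Γ c w = x →
    ∃ w', Relation.ReflTransGen (GPMove Γ c) w w' ∧ iota Γ c w' = u := by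
  intro x u h
  induction h using Relation.ReflTransGen.head_induction_on with
  | refl => exact fun w hw => ⟨w, Relation.ReflTransGen.refl, hw⟩
  | head hstep _ ih =>
    intro w hw
    obtain ⟨w₁, hmv, hiw₁⟩ := lift_estep (hw ▸ hstep)
    obtain ⟨w', hchain, hiw'⟩ := ih w₁ hiw₁
    exact ⟨w', Relation.ReflTransGen.head hmv hchain, hiw'⟩

lemma lift_echain {w : List (V × ℤ)} {u : List (Lett Γ c)}
    (h : Relation.ReflTransGen (EStep Γ c) (iota Γ c w) u) :
    ∃ w', Relation.ReflTransGen (GPMove Γ c) w w' ∧ iota Γ c w' = u :=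
  lift_echain' h w rfl


/-! ### The insertion operation -/

variable (Γ c)

noncomputable def insAux (s : V) (x : GraphProduct Γ c) :
    List (Lett Γ c) → List (Lett Γ c)
  | [] => [(s, x)]
  | (t, y) :: w =>
      if s = t then (if x * y = 1 then w else (s, x * y) :: w)
      else if Γ.Adj s t then (t, y) :: insAux s x w
      else (s, x) :: (t, y) :: w

noncomputable def ins (s : V) (x : GraphProduct Γ c) (w : List (Lett Γ c)) :
    List (Lett Γ c) :=
  if x = 1 then w else insAux Γ c s x w

def CanMerge (s : V) : List (Lett Γ c) → Prop
  | [] => False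
  | (t, _) :: w => s = t ∨ (Γ.Adj s t ∧ CanMerge s w)

def Normal : List (Lett Γ c) → Prop
  | [] => True
  | (t, y) :: w => y ≠ 1 ∧ ¬ CanMerge Γ c t w ∧ Normal w

variable {Γ c}

@[simp] lemma insAux_nil (s : V) (x : GraphProduct Γ c) : insAux Γ c s x [] = [(s, x)] := rfl

lemma insAux_cons (s t : V) (x y : GraphProduct Γ c) (w : List (Lett Γ c)) :
    insAux Γ c s x ((t, y) :: w) =
      if s = t then (if x * y = 1 then w else (s, x * y) :: w)
      else if Γ.Adj s t then (t, y) :: insAux Γ c s x w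
      else (s, x) :: (t, y) :: w := rfl

lemma ins_of_eq (s : V) {x : GraphProduct Γ c} (hx : x = 1) (w : List (Lett Γ c)) :
    ins Γ c s x w = w := if_pos hx

lemma ins_of_ne (s : V) {x : GraphProduct Γ c} (hx : x ≠ 1) (w : List (Lett Γ c)) :
    ins Γ c s x w = insAux Γ c s x w := if_neg hx

@[simp] lemma canMerge_nil (s : V) : CanMerge Γ c s ([] : List (Lett Γ c)) ↔ False := Iff.rfl

@[simp] lemma canMerge_cons (s t : V) (y : GraphProduct Γ c) (w : List (Lett Γ c)) :
    CanMerge Γ c s ((t, y) :: w) ↔ s = t ∨ (Γ.Adj s t ∧ CanMerge Γ c s w) := Iff.rfl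

@[simp] lemma normal_nil : Normal Γ c ([] : List (Lett Γ c)) := trivial

@[simp] lemma normal_cons (t : V) (y : GraphProduct Γ c) (w : List (Lett Γ c)) :
    Normal Γ c ((t, y) :: w) ↔ (y ≠ 1 ∧ ¬ CanMerge Γ c t w ∧ Normal Γ c w) := Iff.rfl

/-- L4: if no merge is possible, insertion is a sequence of swaps past the prefix. -/
lemma insAux_of_not_canMerge {s : V} {w : List (Lett Γ c)} (hcm : ¬ CanMerge Γ c s w)
    (x : GraphProduct Γ c) : SwEq Γ c (insAux Γ c s x w) ((s, x) :: w) := by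
  induction w with
  | nil => exact SwEq.rfl
  | cons a w ih =>
    obtain ⟨t, y⟩ := a
    rw [canMerge_cons] at hcm
    push_neg at hcm
    obtain ⟨hst, h2⟩ := hcm
    by_cases hadj : Γ.Adj s t
    · rw [insAux_cons, if_neg hst, if_pos hadj]
      exact (SwEq.cons _ (ih (h2 hadj))).trans
        (SwEq.single (ESw.head (t, y) (s, x) w hadj.symm))
    · rw [insAux_cons, if_neg hst, if_neg hadj]
      exact SwEq.rfl

/-- L1a -/
lemma canMerge_insAux {s t : V} (hts : Γ.Adj t s) {x : GraphProduct Γ c}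
    {w : List (Lett Γ c)} (h : CanMerge Γ c t (insAux Γ c s x w)) : CanMerge Γ c t w := by
  induction w with
  | nil =>
    rcases (canMerge_cons t s x []).mp h with h1 | ⟨h1, h2⟩
    · exact absurd h1 hts.ne
    · exact absurd h2 (by simp)
  | cons a w ih =>
    obtain ⟨u, y⟩ := a
    rw [insAux_cons] at h
    by_cases hsu : s = u
    · rw [if_pos hsu] at h
      by_cases h1 : x * y = 1
      · rw [if_pos h1] at h
        exact (canMerge_cons t u y w).mpr (Or.inr ⟨hsu ▸ hts, h⟩)
      · rw [if_neg h1] at h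
        rcases (canMerge_cons _ _ _ _).mp h with h2 | ⟨h2, h3⟩
        · exact absurd h2 hts.ne
        · exact (canMerge_cons t u y w).mpr (Or.inr ⟨hsu ▸ hts, h3⟩)
    · rw [if_neg hsu]  at h
      by_cases hadj : Γ.Adj s u
      · rw [if_pos hadj] at h
        rcases (canMerge_cons _ _ _ _).mp h with h2 | ⟨h2, h3⟩
        · exact (canMerge_cons t u y w).mpr (Or.inl h2)
        · exact (canMerge_cons t u y w).mpr (Or.inr ⟨h2, ih h3⟩)
      · rw [if_neg hadj] at h
        rcases (canMerge_cons _ _ _ _).mp h with h2 | ⟨h2, h3⟩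
        · exact absurd h2 hts.ne
        · exact h3

/-- L1 -/
lemma insAux_normal {s : V} {x : GraphProduct Γ c} (hx : x ≠ 1) {w : List (Lett Γ c)}
    (hN : Normal Γ c w) : Normal Γ c (insAux Γ c s x w) := by
  induction w with
  | nil => exact (normal_cons s x []).mpr ⟨hx, by simp, trivial⟩
  | cons a w ih =>
    obtain ⟨t, y⟩ := a
    obtain ⟨hy, hcm, hNw⟩ := (normal_cons t y w).mp hN
    by_cases hst : s = t
    · subst hst
      rw [insAux_cons, if_pos rfl]
      by_cases h1 : x * y = 1
      · rw [if_pos h1]; exact hNw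
      · rw [if_neg h1]; exact (normal_cons _ _ _).mpr ⟨h1, hcm, hNw⟩
    · rw [insAux_cons, if_neg hst]
      by_cases hadj : Γ.Adj s t
      · rw [if_pos hadj]
        exact (normal_cons _ _ _).mpr
          ⟨hy, fun hc => hcm (canMerge_insAux hadj.symm hc), ih hNw⟩
      · rw [if_neg hadj]
        refine (normal_cons _ _ _).mpr ⟨hx, ?_, hN⟩
        rw [canMerge_cons]
        push_neg
        exact ⟨hst, fun h => absurd h hadj⟩

lemma ins_normal (s : V) (x : GraphProduct Γ c) {w : List (Lett Γ c)}
    (hN : Normal Γ c w) : Normal Γ c (ins Γ c s x w) := by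
  by_cases hx : x = 1
  · rw [ins_of_eq s hx]; exact hN
  · rw [ins_of_ne s hx]; exact insAux_normal hx hN

/-- L3, single swap step -/
lemma insAux_esw {s : V} {x : GraphProduct Γ c} (hx : x ≠ 1)
    {w w' : List (Lett Γ c)} (h : ESw Γ c w w') :
    SwEq Γ c (insAux Γ c s x w) (insAux Γ c s x w') := by
  induction h with
  | head a b m hadj =>
    obtain ⟨p, α⟩ := a
    obtain ⟨q, β⟩ := b
    simp only at hadj
    have hpq : p ≠ q := hadj.ne
    by_cases hsp : s = p
    · subst hsp
      have hsq : s ≠ q := hadj.ne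
      rw [insAux_cons, if_pos rfl, insAux_cons, if_neg hsq, if_pos hadj,
        insAux_cons, if_pos rfl]
      by_cases h1 : x * α = 1
      · rw [if_pos h1, if_pos h1]; exact SwEq.rfl
      · rw [if_neg h1, if_neg h1]
        exact SwEq.single (ESw.head (s, x * α) (q, β) m hadj)
    · by_cases hsq : s = q
      · subst hsq
        have hps : Γ.Adj p s := hadj
        rw [insAux_cons, if_neg hsp, if_pos hps.symm, insAux_cons, if_pos rfl,
          insAux_cons, if_pos rfl]
        by_cases h1 : x * β = 1
        · rw [if_pos h1, if_pos h1]; exact SwEq.rfl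
        · rw [if_neg h1, if_neg h1]
          exact SwEq.single (ESw.head (p, α) (s, x * β) m hps)
      · by_cases hsp' : Γ.Adj s p <;> by_cases hsq' : Γ.Adj s q
        · rw [insAux_cons, if_neg hsp, if_pos hsp', insAux_cons, if_neg hsq, if_pos hsq',
            insAux_cons, if_neg hsq, if_pos hsq', insAux_cons, if_neg hsp, if_pos hsp']
          exact SwEq.single (ESw.head (p, α) (q, β) _ hadj)
        · rw [insAux_cons, if_neg hsp, if_pos hsp', insAux_cons, if_neg hsq, if_neg hsq',
            insAux_cons, if_neg hsq, if_neg hsq']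
          refine (SwEq.single (ESw.head (p, α) (s, x) ((q, β) :: m) hsp'.symm)).trans ?_
          exact SwEq.cons (s, x) (SwEq.single (ESw.head (p, α) (q, β) m hadj))
        · rw [insAux_cons, if_neg hsp, if_neg hsp', insAux_cons, if_neg hsq, if_pos hsq',
            insAux_cons, if_neg hsp, if_neg hsp']
          refine (SwEq.cons (s, x) (SwEq.single (ESw.head (p, α) (q, β) m hadj))).trans ?_
          exact SwEq.single (ESw.head (s, x) (q, β) ((p, α) :: m) hsq')
        · rw [insAux_cons, if_neg hsp, if_neg hsp', insAux_cons, if_neg hsq, if_neg hsq']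
          exact SwEq.cons (s, x) (SwEq.single (ESw.head (p, α) (q, β) m hadj))
  | cons a hst ih =>
    obtain ⟨t, y⟩ := a
    by_cases hst' : s = t
    · subst hst'
      rw [insAux_cons, if_pos rfl, insAux_cons, if_pos rfl]
      by_cases h1 : x * y = 1
      · rw [if_pos h1, if_pos h1]; exact SwEq.single hst
      · rw [if_neg h1, if_neg h1]; exact SwEq.cons _ (SwEq.single hst)
    · by_cases hadj : Γ.Adj s t
      · rw [insAux_cons, if_neg hst', if_pos hadj, insAux_cons, if_neg hst', if_pos hadj]
        exact SwEq.cons _ ih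
      · rw [insAux_cons, if_neg hst', if_neg hadj, insAux_cons, if_neg hst', if_neg hadj]
        exact SwEq.cons _ (SwEq.cons _ (SwEq.single hst))

lemma ins_swEq (s : V) (x : GraphProduct Γ c) {w w' : List (Lett Γ c)}
    (h : SwEq Γ c w w') : SwEq Γ c (ins Γ c s x w) (ins Γ c s x w') := by
  by_cases hx : x = 1
  · rw [ins_of_eq s hx, ins_of_eq s hx]; exact h
  · rw [ins_of_ne s hx, ins_of_ne s hx]
    induction h with
    | refl => exact SwEq.rfl
    | tail _ h2 ih => exact ih.trans (insAux_esw hx h2)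

/-- L2: insertion is multiplicative (up to swaps) on normal words. -/
lemma ins_mul (s : V) (x y : GraphProduct Γ c) {w : List (Lett Γ c)} (hN : Normal Γ c w) :
    SwEq Γ c (ins Γ c s x (ins Γ c s y w)) (ins Γ c s (x * y) w) := by
  by_cases hy : y = 1
  · rw [ins_of_eq s hy, hy, mul_one]; exact SwEq.rfl
  by_cases hx : x = 1
  · rw [ins_of_eq s hx, hx, one_mul]; exact SwEq.rfl
  rw [ins_of_ne s hy]
  revert hN
  induction w with
  | nil =>
    intro _
    rw [insAux_nil, ins_of_ne s hx, insAux_cons, if_pos rfl]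
    by_cases h1 : x * y = 1
    · rw [if_pos h1, ins_of_eq s h1]; exact SwEq.rfl
    · rw [if_neg h1, ins_of_ne s h1, insAux_nil]; exact SwEq.rfl
  | cons a w ih =>
    intro hN
    obtain ⟨t, z⟩ := a
    obtain ⟨hz, hcm, hNw⟩ := (normal_cons t z w).mp hN
    by_cases hst : s = t
    · subst hst
      rw [insAux_cons, if_pos rfl]
      by_cases h1 : y * z = 1
      · rw [if_pos h1]
        have hLHS : SwEq Γ c (ins Γ c s x w) ((s, x) :: w) := by
          rw [ins_of_ne s hx]; exact insAux_of_not_canMerge hcm x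
        by_cases hxy : x * y = 1
        · rw [ins_of_eq s hxy]
          have hzx : z = x := by
            have h1' : z = y⁻¹ := (inv_eq_of_mul_eq_one_right h1).symm
            have h2' : x = y⁻¹ := (inv_eq_of_mul_eq_one_left hxy).symm
            rw [h1', h2']
          rw [hzx]
          exact hLHS
        · rw [ins_of_ne s hxy, insAux_cons, if_pos rfl]
          have h2 : x * y * z = x := by rw [mul_assoc, h1, mul_one]
          rw [if_neg (by rw [h2]; exact hx), h2]
          exact hLHS
      · rw [if_neg h1, ins_of_ne s hx, insAux_cons, if_pos rfl]
        by_cases hxy : x * y = 1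
        · rw [ins_of_eq s hxy]
          have h2 : x * (y * z) = z := by rw [← mul_assoc, hxy, one_mul]
          rw [if_neg (by rw [h2]; exact hz), h2]
          exact SwEq.rfl
        · rw [ins_of_ne s hxy, insAux_cons, if_pos rfl, ← mul_assoc]
          exact SwEq.rfl
    · by_cases hadj : Γ.Adj s t
      · rw [insAux_cons, if_neg hst, if_pos hadj, ins_of_ne s hx, insAux_cons,
          if_neg hst, if_pos hadj]
        have ihw := ih hNw
        rw [ins_of_ne s hx] at ihw
        by_cases hxy : x * y = 1
        · rw [ins_of_eq s hxy]
          have := ihw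
          rw [ins_of_eq s hxy] at this
          exact SwEq.cons _ this
        · rw [ins_of_ne s hxy, insAux_cons, if_neg hst, if_pos hadj]
          have := ihw
          rw [ins_of_ne s hxy] at this
          exact SwEq.cons _ this
      · rw [insAux_cons, if_neg hst, if_neg hadj, ins_of_ne s hx, insAux_cons, if_pos rfl]
        by_cases hxy : x * y = 1
        · rw [if_pos hxy, ins_of_eq s hxy]; exact SwEq.rfl
        · rw [if_neg hxy, ins_of_ne s hxy, insAux_cons, if_neg hst, if_neg hadj]
          exact SwEq.rfl

/-- C: insertions at adjacent vertices commute (up to swaps). -/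
lemma ins_comm {s t : V} (hadj : Γ.Adj s t) (x y : GraphProduct Γ c)
    (w : List (Lett Γ c)) :
    SwEq Γ c (ins Γ c s x (ins Γ c t y w)) (ins Γ c t y (ins Γ c s x w)) := by
  by_cases hx : x = 1
  · rw [ins_of_eq s hx, ins_of_eq s hx]; exact SwEq.rfl
  by_cases hy : y = 1
  · rw [ins_of_eq t hy, ins_of_eq t hy]; exact SwEq.rfl
  rw [ins_of_ne s hx, ins_of_ne t hy, ins_of_ne t hy, ins_of_ne s hx]
  have hst : s ≠ t := hadj.ne
  have hts : t ≠ s := hadj.ne'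
  induction w with
  | nil =>
    rw [insAux_nil, insAux_nil, insAux_cons s t x y [], if_neg hst, if_pos hadj,
      insAux_nil, insAux_cons t s y x [], if_neg hts, if_pos hadj.symm, insAux_nil]
    exact SwEq.single (ESw.head (t, y) (s, x) [] hadj.symm)
  | cons a w ih =>
    obtain ⟨u, z⟩ := a
    by_cases hsu0 : s = u
    · subst hsu0
      rw [insAux_cons s s x z w, if_pos rfl]
      rw [insAux_cons t s y z w, if_neg hts, if_pos hadj.symm]
      rw [insAux_cons s s x z (insAux Γ c t y w), if_pos rfl]
      by_cases h1 : x * z = 1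
      · rw [if_pos h1, if_pos h1]; exact SwEq.rfl
      · rw [if_neg h1, if_neg h1, insAux_cons t s y (x * z) w, if_neg hts,
          if_pos hadj.symm]
        exact SwEq.rfl
    · by_cases htu0 : t = u
      · subst htu0
        rw [insAux_cons t t y z w, if_pos rfl]
        rw [insAux_cons s t x z w, if_neg hst, if_pos hadj]
        rw [insAux_cons t t y z (insAux Γ c s x w), if_pos rfl]
        by_cases h1 : y * z = 1
        · rw [if_pos h1, if_pos h1]; exact SwEq.rfl
        · rw [if_neg h1, if_neg h1, insAux_cons s t x (y * z) w, if_neg hst,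
            if_pos hadj]
          exact SwEq.rfl
      · by_cases hsu : Γ.Adj s u <;> by_cases htu : Γ.Adj t u
        · rw [insAux_cons t u y z w, if_neg htu0, if_pos htu,
            insAux_cons s u x z w, if_neg hsu0, if_pos hsu,
            insAux_cons s u x z (insAux Γ c t y w), if_neg hsu0, if_pos hsu,
            insAux_cons t u y z (insAux Γ c s x w), if_neg htu0, if_pos htu]
          exact SwEq.cons _ ih
        · rw [insAux_cons t u y z w, if_neg htu0, if_neg htu,
            insAux_cons s t x y ((u, z) :: w), if_neg hst, if_pos hadj,
            insAux_cons s u x z w, if_neg hsu0, if_pos hsu,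
            insAux_cons t u y z (insAux Γ c s x w), if_neg htu0, if_neg htu]
          exact SwEq.rfl
        · rw [insAux_cons t u y z w, if_neg htu0, if_pos htu,
            insAux_cons s u x z (insAux Γ c t y w), if_neg hsu0, if_neg hsu,
            insAux_cons s u x z w, if_neg hsu0, if_neg hsu,
            insAux_cons t s y x ((u, z) :: w), if_neg hts, if_pos hadj.symm,
            insAux_cons t u y z w, if_neg htu0, if_pos htu]
          exact SwEq.rfl
        · rw [insAux_cons t u y z w, if_neg htu0, if_neg htu,
            insAux_cons s t x y ((u, z) :: w), if_neg hst, if_pos hadj,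
            insAux_cons s u x z w, if_neg hsu0, if_neg hsu,
            insAux_cons t s y x ((u, z) :: w), if_neg hts, if_pos hadj.symm,
            insAux_cons t u y z w, if_neg htu0, if_neg htu]
          exact SwEq.single (ESw.head (t, y) (s, x) _ hadj.symm)

/-! ### shrinking chains from a mergeable prefix -/

lemma estep_cons (a : Lett Γ c) {w w' : List (Lett Γ c)} (h : EStep Γ c w w') :
    EStep Γ c (a :: w) (a :: w') :=
  h.elim (fun h => Or.inl (ESw.cons a h)) (fun h => Or.inr (ESh.cons a h))

lemma esteps_cons (a : Lett Γ c) {w w' : List (Lett Γ c)}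
    (h : Relation.ReflTransGen (EStep Γ c) w w') :
    Relation.ReflTransGen (EStep Γ c) (a :: w) (a :: w') :=
  Relation.ReflTransGen.lift _ (fun _ _ hh => estep_cons a hh) _ _ h

lemma shrink_chain {s : V} {m : List (Lett Γ c)} (hc : CanMerge Γ c s m)
    (x : GraphProduct Γ c) :
    ∃ u, Relation.ReflTransGen (EStep Γ c) ((s, x) :: m) u ∧ u.length ≤ m.length := by
  induction m generalizing x with
  | nil => exact absurd hc (by simp)
  | cons a m' ih =>
    obtain ⟨t, y⟩ := a
    rcases (canMerge_cons s t y m').mp hc with h1 | ⟨h2, h3⟩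
    · subst h1
      exact ⟨(s, x * y) :: m',
        Relation.ReflTransGen.single (Or.inr (ESh.merge s x y m')), by simp⟩
    · obtain ⟨u', hch, hlen⟩ := ih h3 x
      refine ⟨(t, y) :: u', ?_, by simpa using Nat.succ_le_succ hlen⟩
      exact Relation.ReflTransGen.head
        (Or.inl (ESw.head (s, x) (t, y) m' h2)) (esteps_cons (t, y) hch)

/-! ### the quotient of normal words by swap equivalence -/

variable (Γ c)

def NW := {w : List (Lett Γ c) // Normal Γ c w}

instance nwSetoid : Setoid (NW Γ c) :=
  ⟨fun a b => SwEq Γ c a.1 b.1, ⟨fun _ => SwEq.rfl, SwEq.symm, SwEq.trans⟩⟩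

def QW := Quotient (nwSetoid Γ c)

noncomputable def insQ (s : V) (x : GraphProduct Γ c) : QW Γ c → QW Γ c :=
  Quotient.map (fun m : NW Γ c => (⟨ins Γ c s x m.1, ins_normal s x m.2⟩ : NW Γ c))
    (fun _ _ h => ins_swEq s x h)

variable {Γ c}

@[simp] lemma insQ_mk (s : V) (x : GraphProduct Γ c) (m : NW Γ c) :
    insQ Γ c s x ⟦m⟧ = ⟦(⟨ins Γ c s x m.1, ins_normal s x m.2⟩ : NW Γ c)⟧ := rfl

lemma insQ_one (s : V) (q : QW Γ c) : insQ Γ c s 1 q = q := by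
  induction q using Quotient.inductionOn with
  | h m =>
    rw [insQ_mk]
    refine Quotient.sound ?_
    show SwEq Γ c (ins Γ c s 1 m.1) m.1
    rw [ins_of_eq s rfl]
    exact SwEq.rfl

lemma insQ_mul (s : V) (x y : GraphProduct Γ c) (q : QW Γ c) :
    insQ Γ c s x (insQ Γ c s y q) = insQ Γ c s (x * y) q := by
  induction q using Quotient.inductionOn with
  | h m =>
    rw [insQ_mk, insQ_mk]
    exact Quotient.sound (ins_mul s x y m.2)

variable (Γ c)

noncomputable def insPerm (s : V) (x : GraphProduct Γ c) : Equiv.Perm (QW Γ c) where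
  toFun := insQ Γ c s x
  invFun := insQ Γ c s x⁻¹
  left_inv := fun q => by rw [insQ_mul, inv_mul_cancel, insQ_one]
  right_inv := fun q => by rw [insQ_mul, mul_inv_cancel, insQ_one]

noncomputable def insHom (s : V) : GraphProduct Γ c →* Equiv.Perm (QW Γ c) where
  toFun x := insPerm Γ c s x
  map_one' := Equiv.ext fun q => insQ_one s q
  map_mul' x y := Equiv.ext fun q => by
    have : (insPerm Γ c s x * insPerm Γ c s y) q = insQ Γ c s x (insQ Γ c s y q) := rfl
    rw [this]
    exact (insQ_mul s x y q).symm

variable {Γ c}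

@[simp] lemma insHom_apply (s : V) (x : GraphProduct Γ c) (q : QW Γ c) :
    (insHom Γ c s x) q = insQ Γ c s x q := rfl

lemma insHom_comm {s t : V} (hadj : Γ.Adj s t) (x y : GraphProduct Γ c) :
    Commute (insHom Γ c s x) (insHom Γ c t y) := by
  apply Equiv.ext
  intro q
  induction q using Quotient.inductionOn with
  | h m =>
    show insQ Γ c s x (insQ Γ c t y ⟦m⟧) = insQ Γ c t y (insQ Γ c s x ⟦m⟧)
    rw [insQ_mk, insQ_mk]
    exact Quotient.sound (ins_comm hadj x y m.1)

/-! ### relators hold -/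

lemma rel_one {r : FreeGroup V} (hr : r ∈ graphProductRels Γ c) :
    PresentedGroup.mk (graphProductRels Γ c) r = 1 :=
  (QuotientGroup.eq_one_iff r).mpr (Subgroup.subset_normalClosure hr)

lemma gpGen_pow_eq_one {s : V} {n : ℕ} (h : c s = (n : ℕ∞)) : gpGen Γ c s ^ n = 1 := by
  have h2 : PresentedGroup.mk (graphProductRels Γ c) (FreeGroup.of s ^ n) = 1 :=
    rel_one (Or.inl ⟨s, n, h, rfl⟩)
  rw [map_pow] at h2
  exact h2

lemma gpGen_comm {s t : V} (hadj : Γ.Adj s t) :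
    Commute (gpGen Γ c s) (gpGen Γ c t) := by
  have h2 : PresentedGroup.mk (graphProductRels Γ c)
      (FreeGroup.of s * FreeGroup.of t * (FreeGroup.of s)⁻¹ * (FreeGroup.of t)⁻¹) = 1 :=
    rel_one (Or.inr ⟨s, t, hadj, rfl⟩)
  simp only [map_mul, map_inv] at h2
  apply commutatorElement_eq_one_iff_commute.mp
  rw [commutatorElement_def]
  exact h2

lemma relcheck : ∀ r ∈ graphProductRels Γ c,
    FreeGroup.lift (fun v => insHom Γ c v (gpGen Γ c v)) r = 1 := by
  rintro r (⟨s, n, hcs, rfl⟩ | ⟨s, t, hadj, rfl⟩)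
  · rw [map_pow, FreeGroup.lift_apply_of, ← map_pow, gpGen_pow_eq_one hcs, map_one]
  · simp only [map_mul, map_inv, FreeGroup.lift_apply_of]
    have hc := insHom_comm hadj (gpGen Γ c s) (gpGen Γ c t)
    rw [hc.eq, mul_inv_cancel_right, mul_inv_cancel]

variable (Γ c)

noncomputable def phi : GraphProduct Γ c →* Equiv.Perm (QW Γ c) :=
  PresentedGroup.toGroup (relcheck (Γ := Γ) (c := c))

def epsQ : QW Γ c := ⟦(⟨[], normal_nil⟩ : NW Γ c)⟧

noncomputable def NFQ (w : List (V × ℤ)) : QW Γ c :=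
  w.foldr (fun p q => insQ Γ c p.1 (gpGen Γ c p.1 ^ p.2) q) (epsQ Γ c)

variable {Γ c}

@[simp] lemma NFQ_nil : NFQ Γ c [] = epsQ Γ c := rfl
@[simp] lemma NFQ_cons (p : V × ℤ) (w : List (V × ℤ)) :
    NFQ Γ c (p :: w) = insQ Γ c p.1 (gpGen Γ c p.1 ^ p.2) (NFQ Γ c w) := rfl

lemma phi_gpGen (s : V) : phi Γ c (gpGen Γ c s) = insHom Γ c s (gpGen Γ c s) :=
  PresentedGroup.toGroup.of _

lemma phi_wordProd (w : List (V × ℤ)) :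
    phi Γ c (wordProd Γ c w) (epsQ Γ c) = NFQ Γ c w := by
  induction w with
  | nil =>
    have : wordProd Γ c [] = 1 := rfl
    rw [this, map_one, NFQ_nil]
    rfl
  | cons p w ih =>
    have hw : wordProd Γ c (p :: w) = gpGen Γ c p.1 ^ p.2 * wordProd Γ c w := by
      simp [wordProd]
    rw [hw, map_mul, Equiv.Perm.mul_apply, ih, NFQ_cons, map_zpow, phi_gpGen,
      ← map_zpow (insHom Γ c p.1)]
    rfl

/-! ### evaluating on a reduced word -/

lemma nfq_reduced (w : List (V × ℤ)) (hred : GPReduced Γ c w) :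
    ∃ m : NW Γ c, NFQ Γ c w = ⟦m⟧ ∧ SwEq Γ c m.1 (iota Γ c w) := by
  induction w with
  | nil => exact ⟨⟨[], normal_nil⟩, rfl, SwEq.rfl⟩
  | cons p w ih =>
    obtain ⟨m, hm, hsw⟩ := ih (reduced_tail hred)
    obtain ⟨s, e⟩ := p
    set x := gpGen Γ c s ^ e with hxdef
    have hx : x ≠ 1 := by
      intro h
      have hmv : GPMove Γ c ((s, e) :: w) w := by
        have := GPMove.del (Γ := Γ) (c := c) [] w s e h
        simpa using this
      have := hred w (Relation.ReflTransGen.single hmv)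
      simp at this
    have hcm : ¬ CanMerge Γ c s m.1 := by
      intro hc
      obtain ⟨u, hch, hlen⟩ := shrink_chain hc x
      have hsw2 : SwEq Γ c (iota Γ c ((s, e) :: w)) ((s, x) :: m.1) := by
        rw [iota_cons]
        exact SwEq.cons _ hsw.symm
      have hfull : Relation.ReflTransGen (EStep Γ c) (iota Γ c ((s, e) :: w)) u :=
        (Relation.ReflTransGen.mono (fun _ _ h => Or.inl h) _ _ hsw2).trans hch
      obtain ⟨w', hmoves, hiw'⟩ := lift_echain hfull
      have hlw : w'.length ≤ w.length := by
        have h1 : w'.length = u.length := by rw [← hiw']; simp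
        have h2 : m.1.length = w.length := by
          have := hsw.length
          simpa using this
        omega
      have := hred w' hmoves
      simp at this
      omega
    refine ⟨⟨ins Γ c s x m.1, ins_normal s x m.2⟩, ?_, ?_⟩
    · rw [NFQ_cons, hm, insQ_mk]; rfl
    · show SwEq Γ c (ins Γ c s x m.1) (iota Γ c ((s, e) :: w))
      rw [ins_of_ne s hx]
      refine (insAux_of_not_canMerge hcm x).trans ?_
      rw [iota_cons]
      exact SwEq.cons _ hsw

/-! ### the set of possible final letters -/

def Ends (s : V) (w : List (Lett Γ c)) : Prop :=
  ∃ (u : List (Lett Γ c)) (y : GraphProduct Γ c) (v : List (Lett Γ c)),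
    w = u ++ (s, y) :: v ∧ ∀ p ∈ v, Γ.Adj s p.1

lemma ends_esw {s : V} {w w' : List (Lett Γ c)} (h : ESw Γ c w w') (he : Ends s w) :
    Ends s w' := by
  induction h with
  | head a b m hadj =>
    obtain ⟨u, y, v, heq, hv⟩ := he
    match u with
    | [] =>
      rw [List.nil_append] at heq
      injection heq with h1 h2
      refine ⟨[b], y, m, by simp [h1], fun p hp => ?_⟩
      exact hv p (by rw [← h2]; exact List.mem_cons_of_mem b hp)
    | [q] =>
      rw [List.singleton_append] at heq
      injection heq with h1 h2
      injection h2 with h2 h3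
      refine ⟨[], y, a :: m, by simp [h2, h1], fun p hp => ?_⟩
      rcases List.mem_cons.mp hp with hp | hp
      · subst hp
        have : b.1 = s := by rw [h2]
        exact (this ▸ hadj).symm
      · exact hv p (by rw [← h3]; exact hp)
    | q :: q' :: u'' =>
      rw [List.cons_append, List.cons_append] at heq
      injection heq with h1 h2
      injection h2 with h2 h3
      refine ⟨b :: a :: u'', y, v, ?_, hv⟩
      simp [h3]
  | cons a hst ih =>
    rename_i ww ww'
    obtain ⟨u, y, v, heq, hv⟩ := he
    match u with
    | [] =>
      rw [List.nil_append] at heq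
      injection heq with h1 h2
      refine ⟨[], y, ww', by simp [h1], fun p hp => ?_⟩
      exact hv p (by rw [← h2]; exact (hst.perm.mem_iff.mpr hp))
    | q :: u' =>
      rw [List.cons_append] at heq
      injection heq with h1 h2
      obtain ⟨u2, y2, v2, heq2, hv2⟩ := ih ⟨u', y, v, h2, hv⟩
      exact ⟨a :: u2, y2, v2, by rw [heq2, h1, List.cons_append], hv2⟩

lemma ends_swEq {s : V} {w w' : List (Lett Γ c)} (h : SwEq Γ c w w') (he : Ends s w) :
    Ends s w' := by
  induction h with
  | refl => exact he
  | tail _ h2 ih => exact ends_esw h2 ih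

lemma ends_iota_append (w : List (V × ℤ)) (s : V) (e : ℤ) :
    Ends s (iota Γ c (w ++ [(s, e)])) := by
  refine ⟨iota Γ c w, gpGen Γ c s ^ e, [], by simp, by simp⟩

lemma adj_of_ends {s t : V} (hst : s ≠ t) {n : List (Lett Γ c)}
    (h1 : Ends s n) (h2 : Ends t n) : Γ.Adj s t := by
  obtain ⟨u, y, v, heq, hv⟩ := h1
  obtain ⟨u', y', v', heq', hv'⟩ := h2
  rw [heq] at heq'
  rcases List.append_eq_append_iff.mp heq' with ⟨a', ha1, ha2⟩ | ⟨c', hc1, hc2⟩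
  · match a' with
    | [] =>
      rw [List.nil_append] at ha2
      injection ha2 with hh _
      injection hh with hh _
      exact absurd hh hst
    | q :: a'' =>
      rw [List.cons_append] at ha2
      injection ha2 with _ hh
      have : (t, y') ∈ v := by rw [hh]; exact List.mem_append_right _ List.mem_cons_self
      exact hv _ this
  · match c' with
    | [] =>
      rw [List.nil_append] at hc2
      injection hc2 with hh _
      injection hh with hh _
      exact absurd hh.symm hst
    | q :: c'' =>
      rw [List.cons_append] at hc2
      injection hc2 with _ hh
      have : (s, y) ∈ v' := by rw [hh]; exact List.mem_append_right _ List.mem_cons_self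
      exact (hv' _ this).symm

end GPProof

/-- if `g` ends with `s` and also ends with `t` with `s ≠ t`, then
`s` and `t` are joined by an edge of `Γ` (hence commute). -/
theorem endsWith_two_letters_adj {V : Type*} [Fintype V] [DecidableEq V]
    (Γ : SimpleGraph V) (c : V → ℕ∞) (g : GraphProduct Γ c) (s t : V)
    (hs : EndsWith Γ c g s) (ht : EndsWith Γ c g t) (hst : s ≠ t) :
    Γ.Adj s t ∧ Commute (gpGen Γ c s) (gpGen Γ c t) := by
  obtain ⟨A, e, hAred, hAprod⟩ := hs
  obtain ⟨B, f, hBred, hBprod⟩ := ht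
  have h1 := GPProof.phi_wordProd (Γ := Γ) (c := c) (A ++ [(s, e)])
  have h2 := GPProof.phi_wordProd (Γ := Γ) (c := c) (B ++ [(t, f)])
  rw [hAprod] at h1
  rw [hBprod] at h2
  obtain ⟨m1, hm1, hsw1⟩ := GPProof.nfq_reduced _ hAred
  obtain ⟨m2, hm2, hsw2⟩ := GPProof.nfq_reduced _ hBred
  have hq : (⟦m1⟧ : GPProof.QW Γ c) = ⟦m2⟧ := by rw [← hm1, ← hm2, ← h1, ← h2]
  have hqe : GPProof.SwEq Γ c m1.1 m2.1 := Quotient.exact hq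
  have hX : GPProof.SwEq Γ c (GPProof.iota Γ c (A ++ [(s, e)]))
      (GPProof.iota Γ c (B ++ [(t, f)])) := (hsw1.symm.trans hqe).trans hsw2
  have hEs : GPProof.Ends s (GPProof.iota Γ c (B ++ [(t, f)])) :=
    GPProof.ends_swEq hX (GPProof.ends_iota_append A s e)
  have hEt : GPProof.Ends t (GPProof.iota Γ c (B ++ [(t, f)])) :=
    GPProof.ends_iota_append B t f
  have hadj := GPProof.adj_of_ends hst hEs hEt
  exact ⟨hadj, GPProof.gpGen_comm hadj⟩
end

section
/- The map β : G(Γ) → G(Γ'') defined on generators by β(s) = s for s ∈ V_fin and β(s) = (s,1)·(s,0) for s ∈ V_inf is a well-defined group homomorphism. -/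
open Pointwise

/-- The vertices of `Γ` with finite label. -/
def Vfin {V : Type*} (c : V → ℕ∞) := {s : V // c s ≠ ⊤}

/-- The vertices of `Γ` with infinite label. -/
def Vinf {V : Type*} (c : V → ℕ∞) := {s : V // c s = ⊤}

/-- Vertex set of the Davis–Januszkiewicz graph `Γ''`: `V_fin ∪ (V_inf × {0,1})`,
where `true` encodes `1` and `false` encodes `0`. -/
def DJVert {V : Type*} (c : V → ℕ∞) := Vfin c ⊕ (Vinf c × Bool)

/-- The graph `Γ''`: the subgraph on `V_fin ∪ (V_inf × {1})` is a copy of `Γ`, and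
each `(v,0)` is joined to every other vertex except `(v,1)`. -/
def DJGraph {V : Type*} (Γ : SimpleGraph V) (c : V → ℕ∞) : SimpleGraph (DJVert c) :=
  SimpleGraph.fromRel (fun x y =>
    match x, y with
    | Sum.inl s, Sum.inl t => Γ.Adj s.1 t.1
    | Sum.inl s, Sum.inr (t, b) => if b then Γ.Adj s.1 t.1 else True
    | Sum.inr (t, b), Sum.inl s => if b then Γ.Adj s.1 t.1 else True
    | Sum.inr (s, a), Sum.inr (t, b) =>
        if a = true ∧ b = true then Γ.Adj s.1 t.1 else s.1 ≠ t.1)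

/-- Labels of `Γ''`: vertices of `V_fin` keep their label, the new vertices are
labeled `2`. -/
def DJLabel {V : Type*} (c : V → ℕ∞) : DJVert c → ℕ∞
  | Sum.inl s => c s.1
  | Sum.inr _ => 2

/-- The graph product `G(Γ'')`. -/
abbrev GPdj {V : Type*} (Γ : SimpleGraph V) (c : V → ℕ∞) : Type _ :=
  GraphProduct (DJGraph Γ c) (DJLabel c)

/-- The generator of `G(Γ'')` corresponding to `s ∈ V_fin`. -/
def genFin {V : Type*} (Γ : SimpleGraph V) (c : V → ℕ∞) (s : Vfin c) : GPdj Γ c :=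
  gpGen (DJGraph Γ c) (DJLabel c) (Sum.inl s)

/-- The generator of `G(Γ'')` corresponding to `(s,1)`, `s ∈ V_inf`. -/
def genA {V : Type*} (Γ : SimpleGraph V) (c : V → ℕ∞) (s : Vinf c) : GPdj Γ c :=
  gpGen (DJGraph Γ c) (DJLabel c) (Sum.inr (s, true))

/-- The generator of `G(Γ'')` corresponding to `(s,0)`, `s ∈ V_inf`. -/
def genR {V : Type*} (Γ : SimpleGraph V) (c : V → ℕ∞) (s : Vinf c) : GPdj Γ c :=
  gpGen (DJGraph Γ c) (DJLabel c) (Sum.inr (s, false))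

/-- `φ` is the homomorphism `β`, determined by `β(s) = s` for `s ∈ V_fin` and
`β(s) = (s,1)·(s,0)` for `s ∈ V_inf`. -/
def BetaSpec {V : Type*} (Γ : SimpleGraph V) (c : V → ℕ∞)
    (φ : GraphProduct Γ c →* GPdj Γ c) : Prop :=
  (∀ (s : V) (h : c s ≠ ⊤), φ (gpGen Γ c s) = genFin Γ c ⟨s, h⟩) ∧
  (∀ (s : V) (h : c s = ⊤), φ (gpGen Γ c s) = genA Γ c ⟨s, h⟩ * genR Γ c ⟨s, h⟩)

/-- The subgroup `E` of `G(Γ'')` generated by the elements `(s,0)`, `s ∈ V_inf`. -/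
def Esub {V : Type*} (Γ : SimpleGraph V) (c : V → ℕ∞) : Subgroup (GPdj Γ c) :=
  Subgroup.closure (Set.range (genR Γ c))

def djProj {V : Type*} {c : V → ℕ∞} : DJVert c → V
  | Sum.inl s => s.1
  | Sum.inr (s, _) => s.1

def djBool {V : Type*} {c : V → ℕ∞} : DJVert c → Bool
  | Sum.inl _ => true
  | Sum.inr (_, b) => b

lemma gp_pow_eq_one {V : Type*} (Γ : SimpleGraph V) (c : V → ℕ∞) (s : V) (n : ℕ)
    (h : c s = (n : ℕ∞)) : gpGen Γ c s ^ n = 1 := by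
  have : (QuotientGroup.mk (FreeGroup.of s ^ n : FreeGroup V) : GraphProduct Γ c) = 1 := by
    rw [QuotientGroup.eq_one_iff]
    exact Subgroup.subset_normalClosure (Or.inl ⟨s, n, h, rfl⟩)
  simp only [gpGen, PresentedGroup.of, ← map_pow, ← map_inv, ← map_mul]; exact this

lemma gp_commute {V : Type*} (Γ : SimpleGraph V) (c : V → ℕ∞) {s t : V}
    (h : Γ.Adj s t) : Commute (gpGen Γ c s) (gpGen Γ c t) := by
  have : (QuotientGroup.mk (FreeGroup.of s * FreeGroup.of t * (FreeGroup.of s)⁻¹ *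
      (FreeGroup.of t)⁻¹ : FreeGroup V) : GraphProduct Γ c) = 1 := by
    rw [QuotientGroup.eq_one_iff]
    exact Subgroup.subset_normalClosure (Or.inr ⟨s, t, h, rfl⟩)
  have h2 : gpGen Γ c s * gpGen Γ c t * (gpGen Γ c s)⁻¹ * (gpGen Γ c t)⁻¹ = 1 := by
    simp only [gpGen, PresentedGroup.of, ← map_pow, ← map_inv, ← map_mul]; exact this
  exact commutatorElement_eq_one_iff_commute.mp (by rw [commutatorElement_def]; exact h2)

lemma dj_adj {V : Type*} (Γ : SimpleGraph V) (c : V → ℕ∞) {x y : DJVert c}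
    (h : (match x, y with
    | Sum.inl s, Sum.inl t => Γ.Adj s.1 t.1
    | Sum.inl s, Sum.inr (t, b) => if b then Γ.Adj s.1 t.1 else True
    | Sum.inr (t, b), Sum.inl s => if b then Γ.Adj s.1 t.1 else True
    | Sum.inr (s, a), Sum.inr (t, b) =>
        if a = true ∧ b = true then Γ.Adj s.1 t.1 else s.1 ≠ t.1))
    (hne : x ≠ y) :
    (DJGraph Γ c).Adj x y :=
  ⟨hne, Or.inl h⟩

/-- the map `β` with `β(s) = s` for `s ∈ V_fin` and
`β(s) = (s,1)·(s,0)` for `s ∈ V_inf` is a well-defined homomorphism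
`G(Γ) → G(Γ'')`. -/
theorem beta_exists {V : Type*} [Fintype V] [DecidableEq V]
    (Γ : SimpleGraph V) (c : V → ℕ∞) :
    ∃ φ : GraphProduct Γ c →* GPdj Γ c, BetaSpec Γ c φ := by
  classical
  set f : V → GPdj Γ c := fun s =>
    if h : c s = ⊤ then genA Γ c ⟨s, h⟩ * genR Γ c ⟨s, h⟩ else genFin Γ c ⟨s, h⟩ with hf
  -- generators of GPdj corresponding to vertices of Γ commute when adjacent in Γ
  have comm : ∀ {s t : V}, Γ.Adj s t → Commute (f s) (f t) := by
    intro s t hst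
    have hne := hst.ne
    have key : ∀ (a b : DJVert c),
        (match a, b with
        | Sum.inl s, Sum.inl t => Γ.Adj s.1 t.1
        | Sum.inl s, Sum.inr (t, bb) => if bb then Γ.Adj s.1 t.1 else True
        | Sum.inr (t, bb), Sum.inl s => if bb then Γ.Adj s.1 t.1 else True
        | Sum.inr (s, aa), Sum.inr (t, bb) =>
            if aa = true ∧ bb = true then Γ.Adj s.1 t.1 else s.1 ≠ t.1) → a ≠ b →
        Commute (gpGen (DJGraph Γ c) (DJLabel c) a) (gpGen (DJGraph Γ c) (DJLabel c) b) := by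
      intro a b hm hab
      exact gp_commute _ _ (dj_adj Γ c hm hab)
    simp only [hf]
    by_cases hs : c s = ⊤ <;> by_cases ht : c t = ⊤ <;>
        simp only [dif_pos, dif_neg, hs, ht]
    · -- both infinite: four pairwise commutes
      have c11 : Commute (genA Γ c ⟨s, hs⟩) (genA Γ c ⟨t, ht⟩) :=
        key _ _ (by simpa using hst) (fun hE => hne (congrArg djProj hE))
      have c10 : Commute (genA Γ c ⟨s, hs⟩) (genR Γ c ⟨t, ht⟩) :=
        key _ _ (by simpa using hne) (fun hE => Bool.noConfusion (congrArg djBool hE))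
      have c01 : Commute (genR Γ c ⟨s, hs⟩) (genA Γ c ⟨t, ht⟩) :=
        key _ _ (by simpa using hne) (fun hE => Bool.noConfusion (congrArg djBool hE))
      have c00 : Commute (genR Γ c ⟨s, hs⟩) (genR Γ c ⟨t, ht⟩) :=
        key _ _ (by simpa using hne) (fun hE => hne (congrArg djProj hE))
      exact (c11.mul_right c10).mul_left (c01.mul_right c00)
    · have c1 : Commute (genA Γ c ⟨s, hs⟩) (genFin Γ c ⟨t, ht⟩) :=
        key _ _ (by simpa using hst.symm) Sum.inr_ne_inl
      have c0 : Commute (genR Γ c ⟨s, hs⟩) (genFin Γ c ⟨t, ht⟩) :=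
        key _ _ trivial Sum.inr_ne_inl
      exact c1.mul_left c0
    · have c1 : Commute (genFin Γ c ⟨s, hs⟩) (genA Γ c ⟨t, ht⟩) :=
        key _ _ (by simpa using hst) Sum.inl_ne_inr
      have c0 : Commute (genFin Γ c ⟨s, hs⟩) (genR Γ c ⟨t, ht⟩) :=
        key _ _ trivial Sum.inl_ne_inr
      exact c1.mul_right c0
    · exact key _ _ (by simpa using hst) (fun hE => hne (congrArg djProj hE))
  have hrel : ∀ r ∈ graphProductRels Γ c, FreeGroup.lift f r = 1 := by
    rintro r (⟨s, n, hcs, rfl⟩ | ⟨s, t, hst, rfl⟩)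
    · have hs : c s ≠ ⊤ := by rw [hcs]; exact (WithTop.coe_ne_top)
      have : f s = genFin Γ c ⟨s, hs⟩ := by simp [hf, hs]
      rw [map_pow, FreeGroup.lift_apply_of, this]
      exact gp_pow_eq_one _ _ _ n (by simpa [DJLabel] using hcs)
    · have h := comm hst
      simp only [map_mul, map_inv, FreeGroup.lift_apply_of]
      rw [h.eq]
      group
  refine ⟨PresentedGroup.toGroup hrel, ?_, ?_⟩
  · intro s h
    have := PresentedGroup.toGroup.of hrel (x := s)
    simpa [gpGen, hf, h] using this
  · intro s h
    have := PresentedGroup.toGroup.of hrel (x := s)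
    simpa [gpGen, hf, h] using this
end

section
/- The homomorphism β : G(Γ) → G(Γ'') (with β(s) = s for s ∈ V_fin and β(s) = (s,1)·(s,0) for s ∈ V_inf) is injective. -/
open Pointwise

namespace BetaAux

variable {V : Type*} [DecidableEq V] (Γ : SimpleGraph V) (c : V → ℕ∞)

theorem gpGen_pow_eq_one {s : V} {n : ℕ} (h : c s = (n : ℕ∞)) :
    gpGen Γ c s ^ n = 1 := by
  have hmem : FreeGroup.of s ^ n ∈ graphProductRels Γ c := Or.inl ⟨s, n, h, rfl⟩
  have h1 : (PresentedGroup.mk (graphProductRels Γ c)) (FreeGroup.of s ^ n) = 1 :=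
    (QuotientGroup.eq_one_iff _).mpr (Subgroup.subset_normalClosure hmem)
  calc gpGen Γ c s ^ n
      = (PresentedGroup.mk (graphProductRels Γ c)) (FreeGroup.of s ^ n) := (map_pow _ _ _).symm
    _ = 1 := h1

theorem gpGen_comm {s t : V} (h : Γ.Adj s t) :
    Commute (gpGen Γ c s) (gpGen Γ c t) := by
  have hmem : FreeGroup.of s * FreeGroup.of t * (FreeGroup.of s)⁻¹ * (FreeGroup.of t)⁻¹ ∈
      graphProductRels Γ c := Or.inr ⟨s, t, h, rfl⟩
  have h1 : (PresentedGroup.mk (graphProductRels Γ c))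
      (FreeGroup.of s * FreeGroup.of t * (FreeGroup.of s)⁻¹ * (FreeGroup.of t)⁻¹) = 1 :=
    (QuotientGroup.eq_one_iff _).mpr (Subgroup.subset_normalClosure hmem)
  have h2 : gpGen Γ c s * gpGen Γ c t * (gpGen Γ c s)⁻¹ * (gpGen Γ c t)⁻¹ = 1 := by
    simp only [map_mul, map_inv] at h1; exact h1
  show gpGen Γ c s * gpGen Γ c t = gpGen Γ c t * gpGen Γ c s
  calc gpGen Γ c s * gpGen Γ c t
      = (gpGen Γ c s * gpGen Γ c t * (gpGen Γ c s)⁻¹ * (gpGen Γ c t)⁻¹) *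
        (gpGen Γ c t * gpGen Γ c s) := by group
    _ = gpGen Γ c t * gpGen Γ c s := by rw [h2, one_mul]

/-- sign exponent -/
def e (x : ZMod 2) : ℤ := if x = 0 then 1 else -1

theorem e_mul_e : ∀ a b : ZMod 2, e a * e b = e (a + b) := by decide

theorem flip_rels (f : V → ZMod 2) :
    ∀ r ∈ graphProductRels Γ c,
      FreeGroup.lift (fun s => gpGen Γ c s ^ e (f s)) r = 1 := by
  rintro r (⟨s, n, hn, rfl⟩ | ⟨s, t, hst, rfl⟩)
  · simp only [map_pow, FreeGroup.lift_apply_of]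
    have h1 : (gpGen Γ c s ^ e (f s)) ^ n = (gpGen Γ c s ^ n) ^ e (f s) := by
      rw [← zpow_natCast (gpGen Γ c s ^ e (f s)) n, ← zpow_mul,
        mul_comm (e (f s)) (n : ℤ), zpow_mul, zpow_natCast]
    rw [h1, gpGen_pow_eq_one Γ c hn, one_zpow]
  · simp only [map_mul, map_inv, FreeGroup.lift_apply_of]
    have h := (gpGen_comm Γ c hst).zpow_zpow (e (f s)) (e (f t))
    rw [h.eq]
    group

/-- The flipping endomorphism of the graph product. -/
def flipHom (f : V → ZMod 2) : GraphProduct Γ c →* GraphProduct Γ c :=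
  PresentedGroup.toGroup (flip_rels Γ c f)

@[simp] theorem flipHom_of (f : V → ZMod 2) (s : V) :
    flipHom Γ c f (PresentedGroup.of s) = PresentedGroup.of s ^ e (f s) :=
  PresentedGroup.toGroup.of _

theorem flip_comp (f g : V → ZMod 2) :
    (flipHom Γ c f).comp (flipHom Γ c g) = flipHom Γ c (f + g) := by
  apply PresentedGroup.ext
  intro s
  show flipHom Γ c f (flipHom Γ c g (PresentedGroup.of s)) = _
  rw [flipHom_of, map_zpow, flipHom_of, ← zpow_mul, e_mul_e, flipHom_of]
  rfl

theorem flipHom_zero : flipHom Γ c 0 = MonoidHom.id _ := by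
  apply PresentedGroup.ext
  intro s
  show flipHom Γ c 0 (PresentedGroup.of s) = PresentedGroup.of s
  rw [flipHom_of]
  norm_num [e]

theorem zmod2_add_self : ∀ a : ZMod 2, a + a = 0 := by decide

theorem pi_add_self (f : V → ZMod 2) : f + f = 0 := funext fun v => zmod2_add_self _

/-- Flipping automorphism. -/
def flipAut (f : V → ZMod 2) : MulAut (GraphProduct Γ c) where
  toFun := flipHom Γ c f
  invFun := flipHom Γ c f
  left_inv x := by
    have h : (flipHom Γ c f).comp (flipHom Γ c f) = MonoidHom.id _ := by
      rw [flip_comp, pi_add_self, flipHom_zero]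
    exact DFunLike.congr_fun h x
  right_inv x := by
    have h : (flipHom Γ c f).comp (flipHom Γ c f) = MonoidHom.id _ := by
      rw [flip_comp, pi_add_self, flipHom_zero]
    exact DFunLike.congr_fun h x
  map_mul' := map_mul _

/-- The flipping action as a homomorphism from `(ℤ/2)^V`. -/
def flipAutHom : Multiplicative (V → ZMod 2) →* MulAut (GraphProduct Γ c) where
  toFun f := flipAut Γ c f.toAdd
  map_one' := by
    ext x
    show flipHom Γ c 0 x = x
    rw [flipHom_zero]; rfl
  map_mul' f g := by
    ext x
    show flipHom Γ c (f.toAdd + g.toAdd) x = flipHom Γ c f.toAdd (flipHom Γ c g.toAdd x)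
    rw [← flip_comp]; rfl

/-- The semidirect product `G(Γ) ⋊ (ℤ/2)^V`. -/
abbrev Gsd := GraphProduct Γ c ⋊[flipAutHom Γ c] Multiplicative (V → ZMod 2)

/-- Generator of the `ℤ/2` factor at `s`. -/
def eps (s : V) : Multiplicative (V → ZMod 2) := Multiplicative.ofAdd (Pi.single s 1)

theorem eps_sq (s : V) : eps (V := V) s * eps s = 1 := by
  show Multiplicative.ofAdd (Pi.single s 1 + Pi.single s 1) = 1
  rw [pi_add_self]; rfl

theorem flip_eps_apply (s t : V) :
    flipAutHom Γ c (eps s) (gpGen Γ c t) =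
      gpGen Γ c t ^ e ((Pi.single s 1 : V → ZMod 2) t) := by
  show flipHom Γ c (Pi.single s 1) (PresentedGroup.of t) = _
  rw [flipHom_of]
  rfl

theorem flip_eps_self (s : V) :
    flipAutHom Γ c (eps s) (gpGen Γ c s) = (gpGen Γ c s)⁻¹ := by
  rw [flip_eps_apply, Pi.single_eq_same]
  norm_num [e]

theorem flip_eps_ne {s t : V} (h : t ≠ s) :
    flipAutHom Γ c (eps s) (gpGen Γ c t) = gpGen Γ c t := by
  rw [flip_eps_apply, Pi.single_eq_of_ne h]
  norm_num [e]

/-- The images of the generators of `G(Γ'')` in the semidirect product. -/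
def P : DJVert c → Gsd Γ c
  | Sum.inl s => ⟨gpGen Γ c s.1, 1⟩
  | Sum.inr (s, true) => ⟨gpGen Γ c s.1, eps s.1⟩
  | Sum.inr (s, false) => ⟨1, eps s.1⟩

theorem sd_commute {g h : GraphProduct Γ c} {w u : Multiplicative (V → ZMod 2)}
    (hc : g * flipAutHom Γ c w h = h * flipAutHom Γ c u g) :
    Commute (⟨g, w⟩ : Gsd Γ c) ⟨h, u⟩ := by
  show (⟨g, w⟩ : Gsd Γ c) * ⟨h, u⟩ = ⟨h, u⟩ * ⟨g, w⟩
  ext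
  · simpa using hc
  · exact congrArg (fun m : Multiplicative (V → ZMod 2) => Multiplicative.toAdd m _) (mul_comm w u)

end BetaAux

namespace BetaAux

variable {V : Type*} [DecidableEq V] (Γ : SimpleGraph V) (c : V → ℕ∞)

theorem P_pow (x : DJVert c) {n : ℕ} (hn : DJLabel c x = (n : ℕ∞)) :
    P Γ c x ^ n = 1 := by
  rcases x with s | ⟨s, b⟩
  · have hcs : c s.1 = (n : ℕ∞) := hn
    have hP : P Γ c (Sum.inl s) = SemidirectProduct.inl (gpGen Γ c s.1) := rfl
    rw [hP, ← map_pow, gpGen_pow_eq_one Γ c hcs, map_one]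
  · have h2 : n = 2 := by
      have : ((2 : ℕ) : ℕ∞) = (n : ℕ∞) := hn
      exact (Nat.cast_injective this).symm
    subst h2
    rw [pow_two]
    rcases b with _ | _
    · show (⟨1, eps s.1⟩ : Gsd Γ c) * ⟨1, eps s.1⟩ = 1
      ext
      · simp
      · exact congrArg (fun m : Multiplicative (V → ZMod 2) => Multiplicative.toAdd m _) (eps_sq s.1)
    · show (⟨gpGen Γ c s.1, eps s.1⟩ : Gsd Γ c) * ⟨gpGen Γ c s.1, eps s.1⟩ = 1
      ext
      · simp [flip_eps_self Γ c s.1]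
      · exact congrArg (fun m : Multiplicative (V → ZMod 2) => Multiplicative.toAdd m _) (eps_sq s.1)

theorem vfin_ne_vinf (s : Vfin c) (t : Vinf c) : t.1 ≠ s.1 := by
  intro h
  exact s.2 (h ▸ t.2)

theorem P_commute {x y : DJVert c} (h : (DJGraph Γ c).Adj x y) :
    Commute (P Γ c x) (P Γ c y) := by
  rw [DJGraph, SimpleGraph.fromRel_adj] at h
  obtain ⟨hne, hrel⟩ := h
  rcases x with s | ⟨s, b⟩ <;> rcases y with t | ⟨t, b'⟩
  · -- inl, inl
    have hA : Γ.Adj s.1 t.1 := by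
      rcases hrel with h | h
      · exact h
      · exact h.symm
    exact sd_commute Γ c (by
      simp only [map_one, MulAut.one_apply]
      exact (gpGen_comm Γ c hA).eq)
  · -- inl, inr
    rcases b' with _ | _
    · -- (t, false) : always adjacent
      refine sd_commute Γ c ?_
      simp only [map_one, MulAut.one_apply, mul_one, one_mul]
      exact (flip_eps_ne Γ c (vfin_ne_vinf c s t).symm).symm
    · -- (t, true) : Γ.Adj s t
      have hA : Γ.Adj s.1 t.1 := by
        rcases hrel with h | h
        · simpa using h
        · simpa using h
      refine sd_commute Γ c ?_
      simp only [map_one, MulAut.one_apply]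
      rw [flip_eps_ne Γ c hA.ne]
      exact (gpGen_comm Γ c hA).eq
  · -- inr, inl
    rcases b with _ | _
    · refine sd_commute Γ c ?_
      simp only [map_one, MulAut.one_apply, mul_one, one_mul]
      exact flip_eps_ne Γ c (vfin_ne_vinf c t s).symm
    · have hA : Γ.Adj t.1 s.1 := by
        rcases hrel with h | h
        · simpa using h
        · simpa using h
      refine sd_commute Γ c ?_
      simp only [map_one, MulAut.one_apply]
      rw [flip_eps_ne Γ c hA.ne]
      exact (gpGen_comm Γ c hA.symm).eq
  · -- inr, inr
    rcases b with _ | _ <;> rcases b' with _ | _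
    · -- false, false
      refine sd_commute Γ c ?_
      simp
    · -- false, true
      have hst : s.1 ≠ t.1 := by
        rcases hrel with h | h
        · simpa using h
        · simpa using fun hh => h hh.symm
      refine sd_commute Γ c ?_
      simp only [map_one, mul_one, one_mul, map_one]
      rw [flip_eps_ne Γ c hst.symm]
    · -- true, false
      have hst : s.1 ≠ t.1 := by
        rcases hrel with h | h
        · simpa using h
        · simpa using fun hh => h hh.symm
      refine sd_commute Γ c ?_
      rw [flip_eps_ne Γ c hst]
      simp
    · -- true, true
      have hA : Γ.Adj s.1 t.1 := by
        rcases hrel with h | h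
        · simpa using h
        · exact (by simpa using h : Γ.Adj t.1 s.1).symm
      refine sd_commute Γ c ?_
      rw [flip_eps_ne Γ c hA.ne', flip_eps_ne Γ c hA.ne]
      exact (gpGen_comm Γ c hA).eq

theorem psi_rels :
    ∀ r ∈ graphProductRels (DJGraph Γ c) (DJLabel c),
      FreeGroup.lift (P Γ c) r = 1 := by
  rintro r (⟨x, n, hn, rfl⟩ | ⟨x, y, hxy, rfl⟩)
  · simp only [map_pow, FreeGroup.lift_apply_of]
    exact P_pow Γ c x hn
  · simp only [map_mul, map_inv, FreeGroup.lift_apply_of]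
    have h := P_commute Γ c hxy
    rw [h.eq]
    group

/-- The retraction-like homomorphism `G(Γ'') →* G(Γ) ⋊ (ℤ/2)^V`. -/
def psi : GPdj Γ c →* Gsd Γ c := PresentedGroup.toGroup (psi_rels Γ c)

end BetaAux


/-- the homomorphism `β : G(Γ) → G(Γ'')` is injective. -/
theorem beta_injective {V : Type*} [Fintype V] [DecidableEq V]
    (Γ : SimpleGraph V) (c : V → ℕ∞) (φ : GraphProduct Γ c →* GPdj Γ c)
    (hφ : BetaSpec Γ c φ) :
    Function.Injective φ := by
  classical
  obtain ⟨hfin, hinf⟩ := hφ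
  have hcomp : (BetaAux.psi Γ c).comp φ = SemidirectProduct.inl := by
    apply PresentedGroup.ext
    intro s
    show BetaAux.psi Γ c (φ (gpGen Γ c s)) = SemidirectProduct.inl (gpGen Γ c s)
    by_cases hs : c s = ⊤
    · rw [hinf s hs]
      rw [map_mul]
      have h1 : BetaAux.psi Γ c (genA Γ c ⟨s, hs⟩) = BetaAux.P Γ c (Sum.inr (⟨s, hs⟩, true)) :=
        PresentedGroup.toGroup.of _
      have h2 : BetaAux.psi Γ c (genR Γ c ⟨s, hs⟩) = BetaAux.P Γ c (Sum.inr (⟨s, hs⟩, false)) :=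
        PresentedGroup.toGroup.of _
      rw [h1, h2]
      show (⟨gpGen Γ c s, BetaAux.eps s⟩ : BetaAux.Gsd Γ c) * ⟨1, BetaAux.eps s⟩ =
        ⟨gpGen Γ c s, 1⟩
      ext
      · simp
      · exact congrArg (fun m : Multiplicative (V → ZMod 2) => Multiplicative.toAdd m _) (BetaAux.eps_sq s)
    · rw [hfin s hs]
      have h1 : BetaAux.psi Γ c (genFin Γ c ⟨s, hs⟩) = BetaAux.P Γ c (Sum.inl ⟨s, hs⟩) :=
        PresentedGroup.toGroup.of _
      rw [h1]
      rfl
  intro a b hab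
  have h1 : (BetaAux.psi Γ c).comp φ a = (BetaAux.psi Γ c).comp φ b := by
    show BetaAux.psi Γ c (φ a) = BetaAux.psi Γ c (φ b)
    rw [hab]
  rw [hcomp] at h1
  exact SemidirectProduct.inl_injective h1
end

section
/- Let E ≤ G(Γ'') be the subgroup generated by {(s,0) : s ∈ V_inf}. Then G(Γ'') = β(G(Γ)) ⋊ E: every element of G(Γ'') is uniquely a product β(g)·e with g ∈ G(Γ) and e ∈ E, and β(G(Γ)) is normal in G(Γ''). Moreover conjugation by (t,0) sends β(s) to β(s) for s ≠ t and β(s) to β(s)⁻¹ for s = t (for s, t ∈ V_inf), and fixes β(s) for s ∈ V_fin. -/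
open Pointwise

open scoped Classical

section Aux

variable {V : Type*} (Γ : SimpleGraph V) (c : V → ℕ∞)

lemma gpGen_pow_eq_one {s : V} {n : ℕ} (h : c s = (n : ℕ∞)) : gpGen Γ c s ^ n = 1 := by
  have : gpGen Γ c s ^ n = PresentedGroup.mk _ (FreeGroup.of s ^ n) := by
    simp [gpGen, PresentedGroup.of, map_pow]
  rw [this]
  exact (QuotientGroup.eq_one_iff _).2
    (Subgroup.subset_normalClosure (Or.inl ⟨s, n, h, rfl⟩))

lemma gpGen_comm {s t : V} (h : Γ.Adj s t) :
    Commute (gpGen Γ c s) (gpGen Γ c t) := by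
  rw [← commutatorElement_eq_one_iff_commute]
  have h1 : (PresentedGroup.mk (graphProductRels Γ c))
      (FreeGroup.of s * FreeGroup.of t * (FreeGroup.of s)⁻¹ * (FreeGroup.of t)⁻¹) = 1 :=
    (QuotientGroup.eq_one_iff _).2
      (Subgroup.subset_normalClosure (Or.inr ⟨s, t, h, rfl⟩))
  simp only [map_mul, map_inv] at h1
  simpa [commutatorElement_def, mul_assoc, gpGen, PresentedGroup.of] using h1

end Aux
/-- Sign vectors indexed by the infinite-order vertices. -/
abbrev SignVec {V : Type*} (c : V → ℕ∞) := Vinf c → ℤˣ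

noncomputable def sgn {V : Type*} (c : V → ℕ∞) (w : SignVec c) (v : V) : ℤ :=
  if h : c v = ⊤ then ((w ⟨v, h⟩ : ℤˣ) : ℤ) else 1

lemma sgn_mul {V : Type*} (c : V → ℕ∞) (w w' : SignVec c) (v : V) :
    sgn c (w * w') v = sgn c w v * sgn c w' v := by
  unfold sgn; split <;> rfl

lemma sgn_one {V : Type*} (c : V → ℕ∞) (v : V) : sgn c (1 : SignVec c) v = 1 := by
  unfold sgn; split <;> rfl

lemma signvec_mul_self {V : Type*} {c : V → ℕ∞} (w : SignVec c) : w * w = 1 := by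
  funext t; exact Int.units_mul_self _

noncomputable def delta {V : Type*} (c : V → ℕ∞) (s : Vinf c) : SignVec c :=
  fun t => if t = s then -1 else 1

lemma sgn_delta {V : Type*} (c : V → ℕ∞) (s : Vinf c) (v : V) :
    sgn c (delta c s) v = if v = s.1 then -1 else 1 := by
  unfold sgn delta
  by_cases h : c v = ⊤
  · rw [dif_pos h]
    by_cases hv : v = s.1
    · rw [if_pos hv]; split_ifs with h1
      · simp
      · exact absurd (Subtype.ext hv) h1
    · rw [if_neg hv]; split_ifs with h1
      · exact absurd (congrArg Subtype.val h1) hv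
      · simp
  · rw [dif_neg h, if_neg]
    intro hv; exact h (hv ▸ s.2)

section AutA

variable {V : Type*} (Γ : SimpleGraph V) (c : V → ℕ∞)

lemma autA_rels (w : SignVec c) :
    ∀ r ∈ graphProductRels Γ c,
      FreeGroup.lift (fun v => gpGen Γ c v ^ sgn c w v) r = 1 := by
  rintro r (⟨s, n, hs, rfl⟩ | ⟨s, t, hst, rfl⟩)
  · have hne : c s ≠ ⊤ := by rw [hs]; exact (WithTop.natCast_ne_top n)
    have : sgn c w s = 1 := by unfold sgn; rw [dif_neg hne]
    simp [this, gpGen_pow_eq_one Γ c hs]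
  · have hc : Commute (gpGen Γ c s ^ sgn c w s) (gpGen Γ c t ^ sgn c w t) :=
      (gpGen_comm Γ c hst).zpow_zpow _ _
    simp only [map_mul, map_inv, FreeGroup.lift_apply_of]
    rw [hc.eq]
    group

/-- The endomorphism of the graph product twisting each infinite-order generator by a sign. -/
noncomputable def autA (w : SignVec c) : GraphProduct Γ c →* GraphProduct Γ c :=
  PresentedGroup.toGroup (autA_rels Γ c w)

@[simp] lemma autA_gen (w : SignVec c) (v : V) :
    autA Γ c w (gpGen Γ c v) = gpGen Γ c v ^ sgn c w v :=
  PresentedGroup.toGroup.of _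

lemma autA_mul (w w' : SignVec c) (x : GraphProduct Γ c) :
    autA Γ c w (autA Γ c w' x) = autA Γ c (w * w') x := by
  have : (autA Γ c w).comp (autA Γ c w') = autA Γ c (w * w') := by
    apply PresentedGroup.ext
    intro v
    show autA Γ c w (autA Γ c w' (gpGen Γ c v)) = autA Γ c (w * w') (gpGen Γ c v)
    rw [autA_gen, map_zpow, autA_gen, autA_gen, ← zpow_mul, sgn_mul, mul_comm]
  exact DFunLike.congr_fun this x

lemma autA_one (x : GraphProduct Γ c) : autA Γ c 1 x = x := by
  have : autA Γ c 1 = MonoidHom.id _ := by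
    apply PresentedGroup.ext
    intro v
    show autA Γ c 1 (gpGen Γ c v) = gpGen Γ c v
    rw [autA_gen, sgn_one, zpow_one]
  rw [this]; rfl

/-- `autA` as a multiplicative automorphism. -/
noncomputable def autAEquiv (w : SignVec c) : MulAut (GraphProduct Γ c) :=
  { toFun := autA Γ c w
    invFun := autA Γ c w
    left_inv := fun x => by rw [autA_mul, signvec_mul_self, autA_one]
    right_inv := fun x => by rw [autA_mul, signvec_mul_self, autA_one]
    map_mul' := map_mul _ }

/-- The action of sign vectors on the graph product. -/
noncomputable def theta : SignVec c →* MulAut (GraphProduct Γ c) where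
  toFun := autAEquiv Γ c
  map_one' := by ext x; exact autA_one Γ c x
  map_mul' := fun w w' => by ext x; exact (autA_mul Γ c w w' x).symm

@[simp] lemma theta_apply (w : SignVec c) (x : GraphProduct Γ c) :
    theta Γ c w x = autA Γ c w x := rfl

end AutA
section DJBasic

variable {V : Type*} (Γ : SimpleGraph V) (c : V → ℕ∞)

lemma DJ_adj_fin_fin {s t : Vfin c} (h : Γ.Adj s.1 t.1) :
    (DJGraph Γ c).Adj (Sum.inl s) (Sum.inl t) := by
  refine (SimpleGraph.fromRel_adj _ _ _).mpr ?_
  refine ⟨fun hh => ?_, Or.inl h⟩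
  injection hh with hh
  exact h.ne (congrArg Subtype.val hh)

lemma DJ_adj_fin_A (s : Vfin c) (t : Vinf c) (h : Γ.Adj s.1 t.1) :
    (DJGraph Γ c).Adj (Sum.inl s) (Sum.inr (t, true)) := by
  refine (SimpleGraph.fromRel_adj _ _ _).mpr ?_
  exact ⟨fun hh => Sum.inl_ne_inr hh, Or.inl h⟩

lemma DJ_adj_fin_R (s : Vfin c) (t : Vinf c) :
    (DJGraph Γ c).Adj (Sum.inl s) (Sum.inr (t, false)) := by
  refine (SimpleGraph.fromRel_adj _ _ _).mpr ?_
  exact ⟨fun hh => Sum.inl_ne_inr hh, Or.inl trivial⟩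

lemma DJ_adj_A_A {s t : Vinf c} (h : Γ.Adj s.1 t.1) :
    (DJGraph Γ c).Adj (Sum.inr (s, true)) (Sum.inr (t, true)) := by
  refine (SimpleGraph.fromRel_adj _ _ _).mpr ?_
  refine ⟨fun hh => ?_, Or.inl (by simpa using h)⟩
  injection hh with hh
  exact h.ne (congrArg Subtype.val (congrArg Prod.fst hh))

lemma DJ_adj_A_R {s t : Vinf c} (h : s.1 ≠ t.1) :
    (DJGraph Γ c).Adj (Sum.inr (s, true)) (Sum.inr (t, false)) := by
  refine (SimpleGraph.fromRel_adj _ _ _).mpr ?_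
  refine ⟨fun hh => ?_, Or.inl (by simpa using h)⟩
  injection hh with hh
  exact Bool.noConfusion (congrArg Prod.snd hh)

lemma DJ_adj_R_R {s t : Vinf c} (h : s.1 ≠ t.1) :
    (DJGraph Γ c).Adj (Sum.inr (s, false)) (Sum.inr (t, false)) := by
  refine (SimpleGraph.fromRel_adj _ _ _).mpr ?_
  refine ⟨fun hh => ?_, Or.inl (by simpa using h)⟩
  injection hh with hh
  exact h (congrArg Subtype.val (congrArg Prod.fst hh))

lemma genR_mul_self (s : Vinf c) : genR Γ c s * genR Γ c s = 1 := by
  have := gpGen_pow_eq_one (DJGraph Γ c) (DJLabel c)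
    (s := Sum.inr (s, false)) (n := 2) (by simp [DJLabel])
  rwa [pow_two] at this

lemma genA_mul_self (s : Vinf c) : genA Γ c s * genA Γ c s = 1 := by
  have := gpGen_pow_eq_one (DJGraph Γ c) (DJLabel c)
    (s := Sum.inr (s, true)) (n := 2) (by simp [DJLabel])
  rwa [pow_two] at this

lemma genR_inv (s : Vinf c) : (genR Γ c s)⁻¹ = genR Γ c s :=
  inv_eq_of_mul_eq_one_right (genR_mul_self Γ c s)

lemma genA_inv (s : Vinf c) : (genA Γ c s)⁻¹ = genA Γ c s :=
  inv_eq_of_mul_eq_one_right (genA_mul_self Γ c s)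

lemma comm_fin_R (s : Vfin c) (t : Vinf c) : Commute (genFin Γ c s) (genR Γ c t) :=
  gpGen_comm _ _ (DJ_adj_fin_R Γ c s t)

lemma comm_A_R {s t : Vinf c} (h : s.1 ≠ t.1) : Commute (genA Γ c s) (genR Γ c t) :=
  gpGen_comm _ _ (DJ_adj_A_R Γ c h)

lemma comm_R_R {s t : Vinf c} (h : s.1 ≠ t.1) : Commute (genR Γ c s) (genR Γ c t) :=
  gpGen_comm _ _ (DJ_adj_R_R Γ c h)

end DJBasic
section Model

variable {V : Type*} (Γ : SimpleGraph V) (c : V → ℕ∞)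

/-- The model semidirect product `G(Γ) ⋊ (ℤˣ)^{V_inf}`. -/
abbrev DJModel := SemidirectProduct (GraphProduct Γ c) (SignVec c) (theta Γ c)

open SemidirectProduct in
lemma swap_inr_inl (w : SignVec c) (x : GraphProduct Γ c) :
    (inr w : DJModel Γ c) * inl x = inl (theta Γ c w x) * inr w := by
  ext <;> simp

lemma theta_delta_gen (t : Vinf c) (v : V) :
    theta Γ c (delta c t) (gpGen Γ c v) =
      if v = t.1 then (gpGen Γ c v)⁻¹ else gpGen Γ c v := by
  rw [theta_apply, autA_gen, sgn_delta]
  split <;> simp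

open SemidirectProduct in
lemma comm_inr_delta_inl {t : Vinf c} {v : V} (h : v ≠ t.1) :
    Commute (inl (gpGen Γ c v) : DJModel Γ c) (inr (delta c t)) := by
  unfold Commute SemiconjBy
  rw [swap_inr_inl, theta_delta_gen, if_neg h]

open SemidirectProduct in
lemma comm_inr_inr (w w' : SignVec c) :
    Commute (inr w : DJModel Γ c) (inr w') := by
  unfold Commute SemiconjBy
  rw [← map_mul, ← map_mul, mul_comm]

/-- The defining map of `Φ`. -/
noncomputable def fPhi : DJVert c → DJModel Γ c
  | .inl s => SemidirectProduct.inl (gpGen Γ c s.1)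
  | .inr (s, true) =>
      SemidirectProduct.inl (gpGen Γ c s.1) * SemidirectProduct.inr (delta c s)
  | .inr (s, false) => SemidirectProduct.inr (delta c s)

open SemidirectProduct in
lemma fPhi_comm : ∀ x y : DJVert c, (DJGraph Γ c).Adj x y →
    Commute (fPhi Γ c x) (fPhi Γ c y) := by
  have hfinfin : ∀ s t : Vfin c, Γ.Adj s.1 t.1 →
      Commute (fPhi Γ c (Sum.inl s)) (fPhi Γ c (Sum.inl t)) := by
    intro s t h
    exact (gpGen_comm Γ c h).map SemidirectProduct.inl
  have hfinA : ∀ (s : Vfin c) (t : Vinf c), Γ.Adj s.1 t.1 →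
      Commute (fPhi Γ c (Sum.inl s)) (fPhi Γ c (Sum.inr (t, true))) := by
    intro s t h
    have hne : s.1 ≠ t.1 := fun hh => s.2 (hh ▸ t.2)
    exact ((gpGen_comm Γ c h).map SemidirectProduct.inl).mul_right
      (comm_inr_delta_inl Γ c hne)
  have hfinR : ∀ (s : Vfin c) (t : Vinf c),
      Commute (fPhi Γ c (Sum.inl s)) (fPhi Γ c (Sum.inr (t, false))) := by
    intro s t
    exact comm_inr_delta_inl Γ c (fun hh => s.2 (hh ▸ t.2))
  have hAA : ∀ s t : Vinf c, Γ.Adj s.1 t.1 →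
      Commute (fPhi Γ c (Sum.inr (s, true))) (fPhi Γ c (Sum.inr (t, true))) := by
    intro s t h
    exact (((gpGen_comm Γ c h).map SemidirectProduct.inl).mul_right
        (comm_inr_delta_inl Γ c h.ne)).mul_left
      (((comm_inr_delta_inl Γ c h.ne').symm).mul_right (comm_inr_inr Γ c _ _))
  have hAR : ∀ s t : Vinf c, s.1 ≠ t.1 →
      Commute (fPhi Γ c (Sum.inr (s, true))) (fPhi Γ c (Sum.inr (t, false))) := by
    intro s t h
    exact (comm_inr_delta_inl Γ c h).mul_left (comm_inr_inr Γ c _ _)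
  have hRR : ∀ s t : Vinf c,
      Commute (fPhi Γ c (Sum.inr (s, false))) (fPhi Γ c (Sum.inr (t, false))) := by
    intro s t; exact comm_inr_inr Γ c _ _
  have adjres : ∀ {a b : V}, (Γ.Adj a b ∨ Γ.Adj b a) → Γ.Adj a b :=
    fun h => h.elim id (fun h => h.symm)
  have neres : ∀ {a b : V}, (¬a = b ∨ ¬b = a) → a ≠ b :=
    fun h => h.elim id (fun h hh => h hh.symm)
  rintro x y hadj
  replace hadj := (SimpleGraph.fromRel_adj _ _ _).mp hadj
  obtain ⟨-, hrel⟩ := hadj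
  rcases x with s | ⟨s, _ | _⟩ <;> rcases y with t | ⟨t, _ | _⟩ <;>
    simp only [ne_eq] at hrel
  · exact hfinfin s t (adjres hrel)
  · exact hfinR s t
  · exact hfinA s t (hrel.elim id id)
  · exact (hfinR t s).symm
  · exact hRR s t
  · exact (hAR t s (neres hrel.symm)).symm
  · exact (hfinA t s (hrel.elim id id)).symm
  · exact hAR s t (neres hrel)
  · exact hAA s t (adjres hrel)

end Model
section PhiDef

variable {V : Type*} (Γ : SimpleGraph V) (c : V → ℕ∞)

open SemidirectProduct in
lemma Phi_rels : ∀ r ∈ graphProductRels (DJGraph Γ c) (DJLabel c),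
    FreeGroup.lift (fPhi Γ c) r = 1 := by
  rintro r (⟨x, n, hx, rfl⟩ | ⟨x, y, hxy, rfl⟩)
  · rw [map_pow, FreeGroup.lift_apply_of]
    rcases x with s | ⟨s, b⟩
    · have hs : c s.1 = (n : ℕ∞) := hx
      show (inl (gpGen Γ c s.1) : DJModel Γ c) ^ n = 1
      rw [← map_pow, gpGen_pow_eq_one Γ c hs, map_one]
    · have hn : n = 2 := by
        have : ((2 : ℕ) : ℕ∞) = (n : ℕ∞) := by
          simpa [DJLabel] using hx
        exact (Nat.cast_inj.mp this).symm
      subst hn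
      cases b
      · show (inr (delta c s) : DJModel Γ c) ^ 2 = 1
        rw [← map_pow, pow_two, signvec_mul_self, map_one]
      · show ((inl (gpGen Γ c s.1) : DJModel Γ c) * inr (delta c s)) ^ 2 = 1
        rw [pow_two, mul_assoc, ← mul_assoc (inr (delta c s)), swap_inr_inl,
          theta_delta_gen, if_pos rfl]
        rw [← mul_assoc, ← mul_assoc, ← map_mul, mul_inv_cancel, map_one, one_mul,
          ← map_mul, signvec_mul_self, map_one]
  · have hc := fPhi_comm Γ c x y hxy
    simp only [map_mul, map_inv, FreeGroup.lift_apply_of]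
    rw [hc.eq]
    group

/-- The comparison homomorphism `Φ : G(Γ'') → G(Γ) ⋊ (ℤˣ)^{V_inf}`. -/
noncomputable def Phi : GPdj Γ c →* DJModel Γ c :=
  PresentedGroup.toGroup (Phi_rels Γ c)

@[simp] lemma Phi_genFin (s : Vfin c) :
    Phi Γ c (genFin Γ c s) = SemidirectProduct.inl (gpGen Γ c s.1) :=
  PresentedGroup.toGroup.of _

@[simp] lemma Phi_genA (s : Vinf c) :
    Phi Γ c (genA Γ c s) =
      SemidirectProduct.inl (gpGen Γ c s.1) * SemidirectProduct.inr (delta c s) :=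
  PresentedGroup.toGroup.of _

@[simp] lemma Phi_genR (s : Vinf c) :
    Phi Γ c (genR Γ c s) = SemidirectProduct.inr (delta c s) :=
  PresentedGroup.toGroup.of _

open SemidirectProduct in
lemma Phi_phi {φ : GraphProduct Γ c →* GPdj Γ c} (hφ : BetaSpec Γ c φ)
    (g : GraphProduct Γ c) : Phi Γ c (φ g) = inl g := by
  have : (Phi Γ c).comp φ = (inl : GraphProduct Γ c →* DJModel Γ c) := by
    apply PresentedGroup.ext
    intro s
    show Phi Γ c (φ (gpGen Γ c s)) = inl (gpGen Γ c s)
    by_cases h : c s = ⊤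
    · rw [hφ.2 s h, map_mul, Phi_genA Γ c ⟨s, h⟩, Phi_genR Γ c ⟨s, h⟩, mul_assoc, ← map_mul,
        signvec_mul_self, map_one, mul_one]
    · rw [hφ.1 s h, Phi_genFin Γ c ⟨s, h⟩]
  exact DFunLike.congr_fun this g

lemma phi_injective {φ : GraphProduct Γ c →* GPdj Γ c} (hφ : BetaSpec Γ c φ) :
    Function.Injective φ := by
  intro a b hab
  have := congrArg (Phi Γ c) hab
  rw [Phi_phi Γ c hφ, Phi_phi Γ c hφ] at this
  exact SemidirectProduct.inl_injective this

end PhiDef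
section Conj

variable {V : Type*} (Γ : SimpleGraph V) (c : V → ℕ∞)
variable {φ : GraphProduct Γ c →* GPdj Γ c}

lemma phi_gen_inf (hφ : BetaSpec Γ c φ) (s : Vinf c) :
    φ (gpGen Γ c s.1) = genA Γ c s * genR Γ c s := hφ.2 s.1 s.2

lemma conj_genR_phi_inf (hφ : BetaSpec Γ c φ) (s t : Vinf c) :
    genR Γ c t * φ (gpGen Γ c s.1) * (genR Γ c t)⁻¹ =
      if s = t then (φ (gpGen Γ c s.1))⁻¹ else φ (gpGen Γ c s.1) := by
  rw [phi_gen_inf Γ c hφ s]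
  by_cases h : s = t
  · subst h
    rw [if_pos rfl, mul_inv_rev, genR_inv, genA_inv, mul_assoc, mul_assoc,
      genR_mul_self, mul_one]
  · have hne : s.1 ≠ t.1 := fun hh => h (Subtype.ext hh)
    have hc : Commute (genA Γ c s * genR Γ c s) (genR Γ c t) :=
      (comm_A_R Γ c hne).mul_left (comm_R_R Γ c hne)
    rw [if_neg h, ← hc.eq, mul_assoc, mul_assoc, mul_inv_cancel, mul_one]

lemma conj_genR_phi_fin (hφ : BetaSpec Γ c φ) (s : Vfin c) (t : Vinf c) :
    genR Γ c t * φ (gpGen Γ c s.1) * (genR Γ c t)⁻¹ = φ (gpGen Γ c s.1) := by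
  rw [hφ.1 s.1 s.2]
  have hc : Commute (genFin Γ c ⟨s.1, s.2⟩) (genR Γ c t) := comm_fin_R Γ c s t
  rw [← hc.eq, mul_assoc, mul_inv_cancel, mul_one]

lemma conj_range (g : GPdj Γ c)
    (hg : ∀ s : V, g * φ (gpGen Γ c s) * g⁻¹ ∈ φ.range) :
    ∀ n ∈ φ.range, g * n * g⁻¹ ∈ φ.range := by
  have hrange : φ.range = Subgroup.closure (φ '' Set.range (gpGen Γ c)) := by
    rw [← MonoidHom.map_closure,
      show Set.range (gpGen Γ c)
        = Set.range (PresentedGroup.of (rels := graphProductRels Γ c)) from rfl,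
      PresentedGroup.closure_range_of, ← MonoidHom.range_eq_map]
  intro n hn
  have hle : φ.range ≤ Subgroup.comap (MulAut.conj g).toMonoidHom φ.range := by
    nth_rewrite 1 [hrange]
    refine (Subgroup.closure_le _).2 ?_
    rintro _ ⟨_, ⟨s, rfl⟩, rfl⟩
    simpa [Subgroup.mem_comap, MulAut.conj_apply] using hg s
  simpa [Subgroup.mem_comap, MulAut.conj_apply] using hle hn

lemma genR_conj_range (hφ : BetaSpec Γ c φ) (t : Vinf c) :
    ∀ n ∈ φ.range, genR Γ c t * n * (genR Γ c t)⁻¹ ∈ φ.range := by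
  apply conj_range
  intro s
  by_cases h : c s = ⊤
  · have := conj_genR_phi_inf Γ c hφ ⟨s, h⟩ t
    rw [this]
    split
    · exact Subgroup.inv_mem _ ⟨gpGen Γ c s, rfl⟩
    · exact ⟨gpGen Γ c s, rfl⟩
  · rw [conj_genR_phi_fin Γ c hφ ⟨s, h⟩ t]
    exact ⟨gpGen Γ c s, rfl⟩

lemma genR_mem_normalizer (hφ : BetaSpec Γ c φ) (t : Vinf c) :
    genR Γ c t ∈ Subgroup.normalizer (φ.range : Set (GPdj Γ c)) := by
  rw [Subgroup.mem_normalizer_iff]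
  intro n
  constructor
  · exact fun hn => genR_conj_range Γ c hφ t n hn
  · intro hn
    have h2 := genR_conj_range Γ c hφ t _ hn
    rw [genR_inv] at h2
    rwa [show genR Γ c t * (genR Γ c t * n * genR Γ c t) * genR Γ c t
        = (genR Γ c t * genR Γ c t) * n * (genR Γ c t * genR Γ c t) by group,
      genR_mul_self, one_mul, mul_one] at h2

lemma range_normal (hφ : BetaSpec Γ c φ) : φ.range.Normal := by
  rw [← Subgroup.normalizer_eq_top_iff]
  rw [eq_top_iff, ← PresentedGroup.closure_range_of
    (rels := graphProductRels (DJGraph Γ c) (DJLabel c))]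
  refine (Subgroup.closure_le _).2 ?_
  rintro _ ⟨x, rfl⟩
  rcases x with u | ⟨u, b⟩
  · exact Subgroup.le_normalizer ⟨gpGen Γ c u.1, hφ.1 u.1 u.2⟩
  · cases b
    · exact genR_mem_normalizer Γ c hφ u
    · have hA : (PresentedGroup.of (Sum.inr (u, true)) : GPdj Γ c)
          = φ (gpGen Γ c u.1) * genR Γ c u := by
        rw [phi_gen_inf Γ c hφ u, mul_assoc, genR_mul_self, mul_one]
        rfl
      rw [hA]
      exact Subgroup.mul_mem _ (Subgroup.le_normalizer ⟨gpGen Γ c u.1, rfl⟩)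
        (genR_mem_normalizer Γ c hφ u)

lemma sup_eq_top (hφ : BetaSpec Γ c φ) : φ.range ⊔ Esub Γ c = ⊤ := by
  rw [eq_top_iff, ← PresentedGroup.closure_range_of
    (rels := graphProductRels (DJGraph Γ c) (DJLabel c))]
  refine (Subgroup.closure_le _).2 ?_
  rintro _ ⟨x, rfl⟩
  rcases x with u | ⟨u, b⟩
  · exact Subgroup.mem_sup_left ⟨gpGen Γ c u.1, hφ.1 u.1 u.2⟩
  · cases b
    · exact Subgroup.mem_sup_right
        (Subgroup.subset_closure ⟨u, rfl⟩)
    · have hA : (PresentedGroup.of (Sum.inr (u, true)) : GPdj Γ c)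
          = φ (gpGen Γ c u.1) * genR Γ c u := by
        rw [phi_gen_inf Γ c hφ u, mul_assoc, genR_mul_self, mul_one]
        rfl
      rw [hA]
      exact Subgroup.mul_mem _ (Subgroup.mem_sup_left ⟨gpGen Γ c u.1, rfl⟩)
        (Subgroup.mem_sup_right (Subgroup.subset_closure ⟨u, rfl⟩))

lemma Phi_mem_E {e : GPdj Γ c} (he : e ∈ Esub Γ c) :
    Phi Γ c e ∈ (SemidirectProduct.inr :
      SignVec c →* DJModel Γ c).range := by
  have : Esub Γ c ≤ Subgroup.comap (Phi Γ c)
      (SemidirectProduct.inr : SignVec c →* DJModel Γ c).range := by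
    refine (Subgroup.closure_le _).2 ?_
    rintro _ ⟨s, rfl⟩
    exact ⟨delta c s, (Phi_genR Γ c s).symm⟩
  exact this he

open SemidirectProduct in
lemma decomposition_unique (hφ : BetaSpec Γ c φ) {g g' : GraphProduct Γ c}
    {e e' : GPdj Γ c} (he : e ∈ Esub Γ c) (he' : e' ∈ Esub Γ c)
    (h : φ g * e = φ g' * e') : g = g' ∧ e = e' := by
  obtain ⟨w, hw⟩ := Phi_mem_E Γ c he
  obtain ⟨w', hw'⟩ := Phi_mem_E Γ c he'
  have h2 := congrArg (Phi Γ c) h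
  rw [map_mul, map_mul, Phi_phi Γ c hφ, Phi_phi Γ c hφ, ← hw, ← hw'] at h2
  have hgg : g = g' := by
    have := congrArg SemidirectProduct.left h2
    simpa using this
  refine ⟨hgg, ?_⟩
  subst hgg
  exact mul_left_cancel h

end Conj


/-- `G(Γ'') = β(G(Γ)) ⋊ E`: the image of `β` is normal, every element
of `G(Γ'')` is uniquely `β(g)·e` with `e ∈ E`, and conjugation by `(t,0)` inverts
`β(t)` and fixes `β(s)` for all other generators `s`. -/
theorem semidirect_decomposition {V : Type*} [Fintype V] [DecidableEq V]
    (Γ : SimpleGraph V) (c : V → ℕ∞) (φ : GraphProduct Γ c →* GPdj Γ c)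
    (hφ : BetaSpec Γ c φ) :
    φ.range.Normal ∧
    (∀ x : GPdj Γ c, ∃! p : GraphProduct Γ c × Esub Γ c, φ p.1 * (p.2 : GPdj Γ c) = x) ∧
    (∀ s t : Vinf c,
      genR Γ c t * φ (gpGen Γ c s.1) * (genR Γ c t)⁻¹ =
        if s = t then (φ (gpGen Γ c s.1))⁻¹ else φ (gpGen Γ c s.1)) ∧
    (∀ (s : Vfin c) (t : Vinf c),
      genR Γ c t * φ (gpGen Γ c s.1) * (genR Γ c t)⁻¹ = φ (gpGen Γ c s.1)) := by
  have hnormal : φ.range.Normal := range_normal Γ c hφ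
  refine ⟨hnormal, ?_, conj_genR_phi_inf Γ c hφ, conj_genR_phi_fin Γ c hφ⟩
  intro x
  have hx : x ∈ ((φ.range ⊔ Esub Γ c : Subgroup (GPdj Γ c)) : Set (GPdj Γ c)) := by
    rw [sup_eq_top Γ c hφ]; trivial
  rw [Subgroup.normal_mul] at hx
  obtain ⟨a, ha, b, hb, hab⟩ := hx
  obtain ⟨g, rfl⟩ := ha
  refine ⟨(g, ⟨b, hb⟩), hab, ?_⟩
  rintro ⟨g', e'⟩ h'
  have := decomposition_unique Γ c hφ e'.2 hb (h'.trans hab.symm)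
  exact Prod.ext this.1 (Subtype.ext this.2)
end

section
/- Every right-angled Artin group A(Γ) embeds as a finite index subgroup of a right-angled Coxeter group. Specifically, if all vertices of Γ are labeled ∞ then β : G(Γ) → G(Γ'') is an injective homomorphism from A(Γ) into the right-angled Coxeter group G(Γ''), whose image has index 2^{#V}. -/
open Pointwise

namespace Aux

variable {V : Type*} {Γ : SimpleGraph V} {c : V → ℕ∞}

lemma gp_rel_one {r : FreeGroup V} (h : r ∈ graphProductRels Γ c) :
    (QuotientGroup.mk r : GraphProduct Γ c) = 1 :=
  (QuotientGroup.eq_one_iff r).mpr (Subgroup.subset_normalClosure h)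

lemma gpGen_comm {s t : V} (h : Γ.Adj s t) :
    Commute (gpGen Γ c s) (gpGen Γ c t) := by
  rw [← commutatorElement_eq_one_iff_commute]
  have := gp_rel_one (Γ := Γ) (c := c)
    (Or.inr ⟨s, t, h, rfl⟩ : _ ∈ graphProductRels Γ c)
  simp only [QuotientGroup.mk_mul, QuotientGroup.mk_inv] at this
  rw [commutatorElement_def]
  exact this

lemma gpGen_pow {s : V} {n : ℕ} (h : c s = (n : ℕ∞)) :
    gpGen Γ c s ^ n = 1 := by
  have := gp_rel_one (Γ := Γ) (c := c)
    (Or.inl ⟨s, n, h, rfl⟩ : _ ∈ graphProductRels Γ c)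
  simp only [QuotientGroup.mk_pow] at this
  exact this

-- DJ adjacency facts
lemma ne_of_vinf {s t : Vinf c} (h : s.1 ≠ t.1) : s ≠ t := fun e => h (by rw [e])

lemma inr_ne {s t : Vinf c} {a b : Bool} (h : s.1 ≠ t.1) :
    (Sum.inr (s, a) : DJVert c) ≠ Sum.inr (t, b) := by
  simp only [ne_eq, Sum.inr.injEq, Prod.mk.injEq, not_and]
  intro hst _
  exact ne_of_vinf h hst

lemma adjAA {s t : Vinf c} (h : Γ.Adj s.1 t.1) :
    (DJGraph Γ c).Adj (Sum.inr (s, true)) (Sum.inr (t, true)) := by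
  exact (SimpleGraph.fromRel_adj _ _ _).mpr ⟨inr_ne h.ne, Or.inl (by simp [h])⟩

lemma adjRA {s t : Vinf c} (h : s.1 ≠ t.1) :
    (DJGraph Γ c).Adj (Sum.inr (s, false)) (Sum.inr (t, true)) := by
  exact (SimpleGraph.fromRel_adj _ _ _).mpr ⟨inr_ne h, Or.inl (by simp [h])⟩

lemma adjRR {s t : Vinf c} (h : s.1 ≠ t.1) :
    (DJGraph Γ c).Adj (Sum.inr (s, false)) (Sum.inr (t, false)) := by
  exact (SimpleGraph.fromRel_adj _ _ _).mpr ⟨inr_ne h, Or.inl (by simp [h])⟩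

-- squares
lemma sq_inr (s : Vinf c) (b : Bool) :
    gpGen (DJGraph Γ c) (DJLabel c) (Sum.inr (s, b)) ^ 2 = 1 :=
  gpGen_pow (by simp [DJLabel])

lemma sqA (s : Vinf c) : genA Γ c s * genA Γ c s = 1 := by
  have := sq_inr (Γ := Γ) s true; rwa [pow_two] at this

lemma sqR (s : Vinf c) : genR Γ c s * genR Γ c s = 1 := by
  have := sq_inr (Γ := Γ) s false; rwa [pow_two] at this

lemma invA (s : Vinf c) : (genA Γ c s)⁻¹ = genA Γ c s :=
  inv_eq_of_mul_eq_one_right (sqA s)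

lemma invR (s : Vinf c) : (genR Γ c s)⁻¹ = genR Γ c s :=
  inv_eq_of_mul_eq_one_right (sqR s)

-- commutation
lemma commAA {s t : Vinf c} (h : Γ.Adj s.1 t.1) :
    Commute (genA Γ c s) (genA Γ c t) := gpGen_comm (adjAA h)

lemma commRA {s t : Vinf c} (h : s.1 ≠ t.1) :
    Commute (genR Γ c s) (genA Γ c t) := gpGen_comm (adjRA h)

lemma commRR {s t : Vinf c} (h : s.1 ≠ t.1) :
    Commute (genR Γ c s) (genR Γ c t) := gpGen_comm (adjRR h)

lemma commAR {s t : Vinf c} (h : s.1 ≠ t.1) :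
    Commute (genA Γ c s) (genR Γ c t) := (commRA (Ne.symm h)).symm

-- ZMod 2 helpers
lemma mulSelf_zmod2 : ∀ a : Multiplicative (ZMod 2), a * a = 1 := by decide

lemma zmod2_cases : ∀ a : Multiplicative (ZMod 2),
    a = 1 ∨ a = Multiplicative.ofAdd 1 := by decide

def ε : Multiplicative (ZMod 2) → ℤ := fun a => if a = 1 then 1 else -1

lemma ε_mul : ∀ a b : Multiplicative (ZMod 2), ε (a * b) = ε a * ε b := by decide

lemma ε_one : ε 1 = 1 := rfl
lemma ε_ofAdd : ε (Multiplicative.ofAdd 1) = -1 := rfl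

def involHom {G : Type*} [Group G] (g : G) (h : g * g = 1) :
    Multiplicative (ZMod 2) →* G :=
  MonoidHom.mk' (fun a => if a = 1 then 1 else g) (by
    intro a b
    rcases zmod2_cases a with rfl | rfl <;> rcases zmod2_cases b with rfl | rfl
    · simp
    · simp
    · simp
    · show (if (Multiplicative.ofAdd 1 * Multiplicative.ofAdd 1 : Multiplicative (ZMod 2)) = 1 then 1 else g) = (if (Multiplicative.ofAdd 1 : Multiplicative (ZMod 2)) = 1 then 1 else g) * (if (Multiplicative.ofAdd 1 : Multiplicative (ZMod 2)) = 1 then 1 else g)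
      rw [if_pos (by decide), if_neg (by decide), h])

lemma involHom_ofAdd {G : Type*} [Group G] (g : G) (h : g * g = 1) :
    involHom g h (Multiplicative.ofAdd 1) = g := by
  show (if (Multiplicative.ofAdd 1 : Multiplicative (ZMod 2)) = 1 then 1 else g) = g
  rw [if_neg (by decide)]

end Aux


open Aux

section Main

variable {V : Type*} [Fintype V] [DecidableEq V] (Γ : SimpleGraph V)

/-- abbreviation for the all-`⊤` labeling -/
abbrev ccT (V : Type*) : V → ℕ∞ := fun _ => (⊤ : ℕ∞)

abbrev Wgrp (V : Type*) := V → Multiplicative (ZMod 2)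

def vin (s : V) : Vinf (ccT V) := ⟨s, rfl⟩

/-- general relation check -/
lemma liftRelCheck {V' : Type*} {Γ' : SimpleGraph V'} {c' : V' → ℕ∞} {G : Type*} [Group G]
    (f : V' → G) (hpow : ∀ (s : V') (n : ℕ), c' s = (n : ℕ∞) → f s ^ n = 1)
    (hcomm : ∀ s t, Γ'.Adj s t → Commute (f s) (f t)) :
    ∀ r ∈ graphProductRels Γ' c', FreeGroup.lift f r = 1 := by
  rintro r (⟨s, n, hc, rfl⟩ | ⟨s, t, ha, rfl⟩)
  · rw [map_pow, FreeGroup.lift_apply_of]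
    exact hpow s n hc
  · simp only [map_mul, map_inv, FreeGroup.lift_apply_of]
    rw [← commutatorElement_def,
      commutatorElement_eq_one_iff_commute]
    exact hcomm s t ha

lemma topPow (s : V) (n : ℕ) (h : ccT V s = (n : ℕ∞)) {G : Type*} [Group G] {g : G} :
    g ^ n = 1 := absurd h.symm (by simp)

lemma toGroup_gen {V' : Type*} {Γ' : SimpleGraph V'} {c' : V' → ℕ∞} {G : Type*} [Group G]
    {f : V' → G} (h : ∀ r ∈ graphProductRels Γ' c', FreeGroup.lift f r = 1) (s : V') :
    PresentedGroup.toGroup h (gpGen Γ' c' s) = f s :=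
  PresentedGroup.toGroup.of h

lemma gpHom_ext {V' : Type*} {Γ' : SimpleGraph V'} {c' : V' → ℕ∞} {G : Type*} [Group G]
    {f g : GraphProduct Γ' c' →* G} (h : ∀ s, f (gpGen Γ' c' s) = g (gpGen Γ' c' s)) :
    f = g :=
  PresentedGroup.ext h

/-- the endomorphism of `A(Γ)` raising each generator `t` to the power `ε (w t)` -/
def homEnd (w : Wgrp V) : GraphProduct Γ (ccT V) →* GraphProduct Γ (ccT V) :=
  PresentedGroup.toGroup (liftRelCheck (fun t => gpGen Γ (ccT V) t ^ ε (w t))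
    (fun s n h => topPow s n h)
    (fun s t ha => (gpGen_comm ha).zpow_zpow _ _))

lemma homEnd_gen (w : Wgrp V) (t : V) :
    homEnd Γ w (gpGen Γ (ccT V) t) = gpGen Γ (ccT V) t ^ ε (w t) :=
  toGroup_gen _ t

lemma homEnd_mul (w w' : Wgrp V) :
    homEnd Γ (w * w') = (homEnd Γ w).comp (homEnd Γ w') := by
  refine gpHom_ext (fun t => ?_)
  rw [homEnd_gen, MonoidHom.comp_apply, homEnd_gen, map_zpow, homEnd_gen, ← zpow_mul,
    Pi.mul_apply, ε_mul, mul_comm]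

lemma homEnd_one : homEnd Γ (1 : Wgrp V) = MonoidHom.id _ := by
  refine gpHom_ext (fun t => ?_)
  rw [homEnd_gen]
  show _ = gpGen Γ (ccT V) t
  rw [Pi.one_apply, ε_one, zpow_one]

lemma Wsq (w : Wgrp V) : w * w = 1 := funext fun s => mulSelf_zmod2 (w s)

/-- the action of `(ℤ/2)^V` on `A(Γ)` -/
def φAct : Wgrp V →* MulAut (GraphProduct Γ (ccT V)) where
  toFun w := MonoidHom.toMulEquiv (homEnd Γ w) (homEnd Γ w)
    (by rw [← homEnd_mul, Wsq, homEnd_one]) (by rw [← homEnd_mul, Wsq, homEnd_one])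
  map_one' := by
    ext x
    show homEnd Γ 1 x = x
    rw [homEnd_one]; rfl
  map_mul' w w' := by
    ext x
    show homEnd Γ (w * w') x = homEnd Γ w (homEnd Γ w' x)
    rw [homEnd_mul]; rfl

lemma φAct_gen (w : Wgrp V) (t : V) :
    φAct Γ w (gpGen Γ (ccT V) t) = gpGen Γ (ccT V) t ^ ε (w t) :=
  homEnd_gen Γ w t

def esingle (s : V) : Wgrp V := Pi.mulSingle s (Multiplicative.ofAdd 1)

lemma esingle_sq (s : V) : esingle s * esingle (V := V) s = 1 := Wsq _

lemma φAct_single (s t : V) :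
    φAct Γ (esingle s) (gpGen Γ (ccT V) t) =
      if t = s then (gpGen Γ (ccT V) t)⁻¹ else gpGen Γ (ccT V) t := by
  rw [φAct_gen]
  by_cases h : t = s
  · subst h; simp [esingle, Pi.mulSingle_apply, ε_ofAdd]
  · simp [esingle, Pi.mulSingle_apply, h, ε_one]

/-- β -/
def βhom : GraphProduct Γ (ccT V) →* GPdj Γ (ccT V) :=
  PresentedGroup.toGroup (liftRelCheck
    (fun s => genA Γ (ccT V) (vin s) * genR Γ (ccT V) (vin s))
    (fun s n h => topPow s n h)
    (fun s t ha => by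
      have hne : (vin (V := V) s).1 ≠ (vin t).1 := ha.ne
      exact ((commAA ha).mul_right (commAR hne)).mul_left
        ((commRA hne).mul_right (commRR hne))))

lemma βgen (s : V) :
    βhom Γ (gpGen Γ (ccT V) s) = genA Γ (ccT V) (vin s) * genR Γ (ccT V) (vin s) :=
  toGroup_gen _ s

/-- homomorphism `(ℤ/2)^V → G(Γ'')` sending `e_s ↦ r_s` -/
def f₂hom : Wgrp V →* GPdj Γ (ccT V) :=
  MonoidHom.noncommPiCoprod (fun s : V => involHom (genR Γ (ccT V) (vin s)) (sqR _))
    (by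
      intro s t hst x y
      rcases zmod2_cases x with rfl | rfl <;> rcases zmod2_cases y with rfl | rfl
      · simp
      · simp
      · simp
      · rw [involHom_ofAdd, involHom_ofAdd]
        exact commRR hst)

lemma f₂_single (s : V) : f₂hom Γ (esingle s) = genR Γ (ccT V) (vin s) := by
  rw [esingle]
  unfold f₂hom
  exact (MonoidHom.noncommPiCoprod_mulSingle _ _ _).trans (involHom_ofAdd _ _)

lemma pihom_ext {M : Type*} [Monoid M] {f g : Wgrp V →* M}
    (h : ∀ (s : V) (a : Multiplicative (ZMod 2)),
      f (Pi.mulSingle s a) = g (Pi.mulSingle s a)) : f = g := by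
  ext w
  have hw : w = Finset.univ.noncommProd (fun s => Pi.mulSingle s (w s))
      (show (↑(Finset.univ : Finset V) : Set V).Pairwise _ from fun _ _ _ _ _ => Commute.all _ _) := by
    rw [Finset.noncommProd_eq_prod, Finset.univ_prod_mulSingle]
  rw [hw, Finset.map_noncommProd, Finset.map_noncommProd]
  exact Finset.noncommProd_congr rfl (fun s _ => h s (w s)) _

/-- the target semidirect product -/
abbrev Hsd := SemidirectProduct (GraphProduct Γ (ccT V)) (Wgrp V) (φAct Γ)

open SemidirectProduct in
def fψ : DJVert (ccT V) → Hsd Γ := fun u =>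
  Sum.elim (fun s => absurd rfl s.2)
    (fun p => if p.2 then inl (gpGen Γ (ccT V) p.1.1) * inr (esingle p.1.1)
              else inr (esingle p.1.1)) u

lemma fψ_A (s : Vinf (ccT V)) :
    fψ Γ (Sum.inr (s, true)) =
      SemidirectProduct.inl (gpGen Γ (ccT V) s.1) * SemidirectProduct.inr (esingle s.1) := rfl

lemma fψ_R (s : Vinf (ccT V)) :
    fψ Γ (Sum.inr (s, false)) = SemidirectProduct.inr (esingle s.1) := rfl

lemma inr_esingle_mul_inl (s t : V) :
    (SemidirectProduct.inr (esingle s) : Hsd Γ) * SemidirectProduct.inl (gpGen Γ (ccT V) t) =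
      SemidirectProduct.inl (if t = s then (gpGen Γ (ccT V) t)⁻¹ else gpGen Γ (ccT V) t) *
        SemidirectProduct.inr (esingle s) := by
  ext
  · simp [φAct_single]
  · simp

lemma sqψ_A (s : Vinf (ccT V)) : fψ Γ (Sum.inr (s, true)) ^ 2 = 1 := by
  rw [fψ_A, pow_two, mul_assoc, ← mul_assoc (SemidirectProduct.inr (esingle s.1)),
    inr_esingle_mul_inl, if_pos rfl, ← mul_assoc, ← mul_assoc, ← map_mul, mul_inv_cancel,
    map_one, one_mul, ← map_mul, esingle_sq, map_one]

lemma sqψ_R (s : Vinf (ccT V)) : fψ Γ (Sum.inr (s, false)) ^ 2 = 1 := by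
  rw [fψ_R, pow_two, ← map_mul, esingle_sq, map_one]

lemma hpowψ : ∀ (u : DJVert (ccT V)) (n : ℕ),
    DJLabel (ccT V) u = (n : ℕ∞) → fψ Γ u ^ n = 1 := by
  rintro (s | ⟨s, b⟩) n hc
  · exact absurd rfl s.2
  · have hn : n = 2 := by
      have h2 : (2 : ℕ∞) = (n : ℕ∞) := hc
      exact_mod_cast h2.symm
    subst hn
    cases b
    · exact sqψ_R Γ s
    · exact sqψ_A Γ s

lemma mixed_mul (x y : GraphProduct Γ (ccT V)) (d e : Wgrp V) :
    (SemidirectProduct.inl x * SemidirectProduct.inr d : Hsd Γ) *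
        (SemidirectProduct.inl y * SemidirectProduct.inr e) =
      SemidirectProduct.inl (x * φAct Γ d y) * SemidirectProduct.inr (d * e) := by
  ext <;> simp

lemma hcommψ : ∀ u v, (DJGraph Γ (ccT V)).Adj u v → Commute (fψ Γ u) (fψ Γ v) := by
  rintro (s | ⟨p, a⟩) v h
  · exact absurd rfl s.2
  rcases v with s | ⟨q, b⟩
  · exact absurd rfl s.2
  replace h := (SimpleGraph.fromRel_adj _ _ _).mp h
  obtain ⟨-, hrel⟩ := h
  cases a <;> cases b
  · -- R R
    rw [fψ_R, fψ_R]
    show _ = _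
    rw [← map_mul, ← map_mul, mul_comm]
  · -- R A
    have hne : p.1 ≠ q.1 := by
      rcases hrel with h | h
      · simpa using h
      · have h' : q.1 ≠ p.1 := by simpa using h
        exact h'.symm
    rw [fψ_R, fψ_A]
    show _ = _
    rw [← mul_assoc, inr_esingle_mul_inl, if_neg (Ne.symm hne), mul_assoc, ← map_mul,
      mul_comm (esingle p.1) (esingle q.1), map_mul, ← mul_assoc]
  · -- A R
    have hne : p.1 ≠ q.1 := by
      rcases hrel with h | h
      · simpa using h
      · have h' : q.1 ≠ p.1 := by simpa using h
        exact h'.symm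
    rw [fψ_A, fψ_R]
    show _ = _
    rw [← mul_assoc (SemidirectProduct.inr (esingle q.1)), inr_esingle_mul_inl, if_neg hne,
      mul_assoc, mul_assoc, ← map_mul, ← map_mul, mul_comm (esingle p.1)]
  · -- A A
    have hadj : Γ.Adj p.1 q.1 := by
      rcases hrel with h | h
      · simpa using h
      · have h' : Γ.Adj q.1 p.1 := by simpa using h
        exact h'.symm
    have hne : p.1 ≠ q.1 := hadj.ne
    rw [fψ_A, fψ_A]
    show _ = _
    rw [mixed_mul, mixed_mul, φAct_single, φAct_single, if_neg (Ne.symm hne), if_neg hne,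
      (gpGen_comm hadj).eq, mul_comm (esingle p.1)]

/-- ψ -/
def ψhom : GPdj Γ (ccT V) →* Hsd Γ :=
  PresentedGroup.toGroup (liftRelCheck (fψ Γ) (hpowψ Γ) (hcommψ Γ))

lemma ψ_gen (u : DJVert (ccT V)) :
    ψhom Γ (gpGen (DJGraph Γ (ccT V)) (DJLabel (ccT V)) u) = fψ Γ u :=
  toGroup_gen _ u

/-- the conjugation property -/
def PP (w : Wgrp V) : Prop :=
  ∀ t : V, MulAut.conj (f₂hom Γ w) (βhom Γ (gpGen Γ (ccT V) t)) =
    βhom Γ (gpGen Γ (ccT V) t) ^ ε (w t)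

lemma PP_one : PP Γ 1 := by
  intro t
  rw [show f₂hom Γ (1 : Wgrp V) = 1 from map_one _,
    show MulAut.conj (1 : GPdj Γ (ccT V)) = 1 from map_one _, Pi.one_apply, ε_one, zpow_one]
  rfl

lemma PP_mul {w w' : Wgrp V} (hw : PP Γ w) (hw' : PP Γ w') : PP Γ (w * w') := by
  intro t
  rw [map_mul, map_mul, MulAut.mul_apply, hw' t, map_zpow, hw t, ← zpow_mul,
    Pi.mul_apply, ε_mul, mul_comm (ε (w t))]

lemma PP_single (s : V) (a : Multiplicative (ZMod 2)) : PP Γ (Pi.mulSingle s a) := by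
  rcases zmod2_cases a with rfl | rfl
  · rw [Pi.mulSingle_one]
    exact PP_one Γ
  · intro t
    rw [show (Pi.mulSingle s (Multiplicative.ofAdd 1) : Wgrp V) = esingle s from rfl,
      f₂_single, MulAut.conj_apply, βgen]
    by_cases ht : t = s
    · subst ht
      rw [show (esingle t) t = Multiplicative.ofAdd 1 from by simp [esingle], ε_ofAdd,
        zpow_neg, zpow_one, mul_inv_rev, invR, invA, mul_assoc, mul_assoc, sqR,
        mul_one]
    · have hne : (vin (V := V) s).1 ≠ (vin t).1 := fun e => ht e.symm
      have hc : Commute (genR Γ (ccT V) (vin s))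
          (genA Γ (ccT V) (vin t) * genR Γ (ccT V) (vin t)) :=
        (commRA hne).mul_right (commRR hne)
      rw [hc.eq, mul_inv_cancel_right,
        show (esingle s) t = 1 from by simp [esingle, Pi.mulSingle_apply, ht], ε_one,
        zpow_one]

lemma PP_all (w : Wgrp V) : PP Γ w := by
  have h : PP Γ (∏ s : V, Pi.mulSingle s (w s)) :=
    Finset.prod_induction _ (PP Γ) (fun a b => PP_mul Γ) (PP_one Γ)
      (fun s _ => PP_single Γ s (w s))
  rwa [Finset.univ_prod_mulSingle] at h

lemma compat : ∀ w : Wgrp V, (βhom Γ).comp ((φAct Γ w).toMonoidHom) =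
    (MulAut.conj (f₂hom Γ w)).toMonoidHom.comp (βhom Γ) := by
  intro w
  refine gpHom_ext (fun t => ?_)
  show βhom Γ (φAct Γ w (gpGen Γ (ccT V) t)) =
    MulAut.conj (f₂hom Γ w) (βhom Γ (gpGen Γ (ccT V) t))
  rw [φAct_gen, map_zpow, PP_all Γ w t]

/-- θ -/
def θhom : Hsd Γ →* GPdj Γ (ccT V) :=
  SemidirectProduct.lift (βhom Γ) (f₂hom Γ) (compat Γ)

lemma θψ : (θhom Γ).comp (ψhom Γ) = MonoidHom.id _ := by
  refine gpHom_ext (fun u => ?_)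
  rw [MonoidHom.comp_apply, MonoidHom.id_apply, ψ_gen]
  rcases u with s | ⟨s, b⟩
  · exact absurd rfl s.2
  cases b
  · rw [fψ_R]
    unfold θhom
    rw [SemidirectProduct.lift_inr, f₂_single]
    rfl
  · rw [fψ_A]
    unfold θhom
    rw [map_mul, SemidirectProduct.lift_inl, SemidirectProduct.lift_inr, f₂_single, βgen,
      mul_assoc, sqR, mul_one]
    rfl

lemma ψβ : (ψhom Γ).comp (βhom Γ) =
    (SemidirectProduct.inl : GraphProduct Γ (ccT V) →* Hsd Γ) := by
  refine gpHom_ext (fun t => ?_)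
  have h1 : ψhom Γ (genA Γ (ccT V) (vin t)) = fψ Γ (Sum.inr (vin t, true)) := ψ_gen Γ _
  have h2 : ψhom Γ (genR Γ (ccT V) (vin t)) = fψ Γ (Sum.inr (vin t, false)) := ψ_gen Γ _
  rw [MonoidHom.comp_apply, βgen, map_mul, h1, h2, fψ_A, fψ_R, mul_assoc, ← map_mul,
    esingle_sq, map_one, mul_one]
  rfl

lemma ψθ : (ψhom Γ).comp (θhom Γ) = MonoidHom.id _ := by
  refine SemidirectProduct.hom_ext ?_ ?_
  · rw [MonoidHom.comp_assoc]
    unfold θhom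
    rw [SemidirectProduct.lift_comp_inl, ψβ, MonoidHom.id_comp]
  · rw [MonoidHom.comp_assoc]
    unfold θhom
    rw [SemidirectProduct.lift_comp_inr, MonoidHom.id_comp]
    refine pihom_ext (fun s a => ?_)
    rcases zmod2_cases a with rfl | rfl
    · rw [Pi.mulSingle_one, map_one, map_one]
    · rw [MonoidHom.comp_apply,
        show (Pi.mulSingle s (Multiplicative.ofAdd 1) : Wgrp V) = esingle s from rfl,
        f₂_single]
      exact ψ_gen Γ (Sum.inr (vin s, false))

lemma injβ : Function.Injective (βhom Γ) := by
  intro x y h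
  have h2 := congrArg (ψhom Γ) h
  rw [← MonoidHom.comp_apply, ← MonoidHom.comp_apply, ψβ] at h2
  exact SemidirectProduct.inl_injective h2

end Main

/-- every right-angled Artin group embeds with finite index into a
right-angled Coxeter group: if all labels are `∞`, then `β` embeds `A(Γ) = G(Γ)`
into `G(Γ'')`, all of whose generators are involutions, with image of index
`2^{#V}`. -/
theorem raag_embeds_in_racg {V : Type*} [Fintype V] [DecidableEq V]
    (Γ : SimpleGraph V) :
    ∃ φ : GraphProduct Γ (fun _ => (⊤ : ℕ∞)) →* GPdj Γ (fun _ => (⊤ : ℕ∞)),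
      BetaSpec Γ (fun _ => (⊤ : ℕ∞)) φ ∧ Function.Injective φ ∧
      (∀ w : DJVert (fun _ : V => (⊤ : ℕ∞)),
        gpGen (DJGraph Γ _) (DJLabel _) w ^ 2 = 1) ∧
      φ.range.index = 2 ^ Nat.card V := by
  refine ⟨βhom Γ, ⟨fun s h => absurd rfl h, fun s h => βgen Γ s⟩, injβ Γ, fun w => ?_, ?_⟩
  · rcases w with s | ⟨s, b⟩
    · exact absurd rfl s.2
    · exact Aux.sq_inr s b
  · have hψinj : Function.Injective (ψhom Γ) := by
      intro a b h
      have h2 := congrArg (θhom Γ) h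
      rwa [← MonoidHom.comp_apply, ← MonoidHom.comp_apply, θψ, MonoidHom.id_apply,
        MonoidHom.id_apply] at h2
    have hψsurj : Function.Surjective (ψhom Γ) := fun h =>
      ⟨θhom Γ h, DFunLike.congr_fun (ψθ Γ) h⟩
    have hmap : ((βhom Γ).range.map (ψhom Γ)).index = (βhom Γ).range.index := by
      rw [Subgroup.index_map, (MonoidHom.ker_eq_bot_iff _).mpr hψinj, sup_bot_eq,
        MonoidHom.range_eq_top_of_surjective _ hψsurj, Subgroup.index_top, mul_one]
    have hrangecomp : (βhom Γ).range.map (ψhom Γ) =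
        (SemidirectProduct.inl : GraphProduct Γ (ccT V) →* Hsd Γ).range := by
      rw [← MonoidHom.range_comp, ψβ]
    have hcard : Nat.card (Wgrp V) = 2 ^ Nat.card V := by
      rw [Nat.card_fun]
      congr 1
      rw [Nat.card_eq_fintype_card]
      rfl
    calc (βhom Γ).range.index
        = ((βhom Γ).range.map (ψhom Γ)).index := hmap.symm
      _ = (SemidirectProduct.inl : GraphProduct Γ (ccT V) →* Hsd Γ).range.index := by
          rw [hrangecomp]
      _ = (SemidirectProduct.rightHom (φ := φAct Γ)).ker.index := by
          rw [SemidirectProduct.range_inl_eq_ker_rightHom]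
      _ = Nat.card (SemidirectProduct.rightHom (φ := φAct Γ)).range :=
          Subgroup.index_ker _
      _ = Nat.card (Wgrp V) := by
          rw [MonoidHom.range_eq_top_of_surjective _ SemidirectProduct.rightHom_surjective]
          exact Subgroup.card_top
      _ = 2 ^ Nat.card V := hcard
end
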